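/- arXiv:1906.09410 — 9 statements merged into one kernel-verified Lean document; each statement's English description precedes it below -/
import Mathlib

section
/- Every fixed point of the Baum-Welch algorithm is a fixed point of the Chemical Baum-Welch dynamics. Precisely: suppose the configuration Φ = (α, β, γ, ξ, θ, ψ) satisfies the Baum-Welch fixed-point equations: α_{1h} = π_h ψ_{h,v_1} for all h ∈ H; α_{lh} = Σ_{g∈H} α_{l−1,g} θ_{gh} ψ_{h,v_l} for all h ∈ H and 2 ≤ l ≤ L; β_{lh} = Σ_{g∈H} θ_{hg} ψ_{g,v_{l+1}} β_{l+1,g} for all h ∈ H and 1 ≤ l ≤ L−1; γ_{lh} = α_{lh}β_{lh} / Σ_{g∈H} α_{lg}β_{lg} for all h ∈ H and 1 ≤ l ≤ L−1; ξ_{lgh} = α_{lg} θ_{gh} ψ_{h,v_{l+1}} β_{l+1,h} / Σ_{f∈H} α_{lf}β_{lf} for all g,h ∈ H and 1 ≤ l ≤ L−1; θ_{gh} = Σ_{l=1}^{L−1} ξ_{lgh} / Σ_{l=1}^{L−1} Σ_{f∈H} ξ_{lgf} for all g,h ∈ H; ψ_{hw} = Σ_{l=1}^{L} γ_{lh} δ_{w,v_l}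 / Σ_{l=1}^{L} γ_{lh} for all h ∈ H and w ∈ V, where all the denominators appearing above are nonzero. Then Φ satisfies all the balance equations (F1), (F2), (B), (G), (X), (T), (P) of the Baum-Welch reaction network. -/
/-- Every fixed point of the Baum-Welch algorithm is a fixed point of the Chemical
Baum-Welch dynamics: if the configuration `Φ = (α, β, γ, ξ, θ, ψ)` satisfies the
Baum-Welch fixed-point equations (with nonzero denominators), then it satisfies all the
balance equations (F1), (F2), (B), (G), (X), (T), (P) of the Baum-Welch reaction network. -/
theorem bw_fixed_point_is_chemical_fixed_point
    {H V : Type*} [Fintype H] [Fintype V] [Nonempty H] [Nonempty V] [DecidableEq V]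
    (hstar : H) (vstar : V) (L : ℕ) (hL : 2 ≤ L)
    (v : ℕ → V) (π : H → ℝ) (hπ : ∀ h, 0 < π h)
    (α β γ : ℕ → H → ℝ) (ξ : ℕ → H → H → ℝ) (θ : H → H → ℝ) (ψ : H → V → ℝ)
    -- Baum-Welch fixed-point equations:
    (hα1 : ∀ h, α 1 h = π h * ψ h (v 1))
    (hα : ∀ l, 2 ≤ l → l ≤ L → ∀ h, α l h = ∑ g, α (l - 1) g * θ g h * ψ h (v l))
    (hβ : ∀ l, 1 ≤ l → l ≤ L - 1 → ∀ h,
      β l h = ∑ g, θ h g * ψ g (v (l + 1)) * β (l + 1) g)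
    (hγden : ∀ l, 1 ≤ l → l ≤ L - 1 → (∑ g, α l g * β l g) ≠ 0)
    (hγ : ∀ l, 1 ≤ l → l ≤ L - 1 → ∀ h,
      γ l h = α l h * β l h / ∑ g, α l g * β l g)
    (hξ : ∀ l, 1 ≤ l → l ≤ L - 1 → ∀ g h,
      ξ l g h = α l g * θ g h * ψ h (v (l + 1)) * β (l + 1) h / ∑ f, α l f * β l f)
    (hθden : ∀ g, (∑ l ∈ Finset.Icc 1 (L - 1), ∑ f, ξ l g f) ≠ 0)
    (hθ : ∀ g h, θ g h
      = (∑ l ∈ Finset.Icc 1 (L - 1), ξ l g h) / ∑ l ∈ Finset.Icc 1 (L - 1), ∑ f, ξ l g f)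
    (hψden : ∀ h, (∑ l ∈ Finset.Icc 1 L, γ l h) ≠ 0)
    (hψ : ∀ h w, ψ h w
      = (∑ l ∈ Finset.Icc 1 L, γ l h * (if w = v l then (1 : ℝ) else 0))
          / ∑ l ∈ Finset.Icc 1 L, γ l h) :
    -- (F1)
    (∀ h, α 1 h * (π hstar * ψ hstar (v 1)) = α 1 hstar * (π h * ψ h (v 1))) ∧
    -- (F2)
    (∀ l, 2 ≤ l → l ≤ L → ∀ h,
      α l h * ∑ g, α (l - 1) g * θ g hstar * ψ hstar (v l)
        = α l hstar * ∑ g, α (l - 1) g * θ g h * ψ h (v l)) ∧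
    -- (B)
    (∀ l, 1 ≤ l → l ≤ L - 1 → ∀ h,
      β l h * ∑ g, θ hstar g * ψ g (v (l + 1)) * β (l + 1) g
        = β l hstar * ∑ g, θ h g * ψ g (v (l + 1)) * β (l + 1) g) ∧
    -- (G)
    (∀ l, 1 ≤ l → l ≤ L - 1 → ∀ h,
      γ l h * (α l hstar * β l hstar) = γ l hstar * (α l h * β l h)) ∧
    -- (X)
    (∀ l, 1 ≤ l → l ≤ L - 1 → ∀ g h,
      ξ l g h * (α l hstar * θ hstar hstar * ψ hstar (v (l + 1)) * β (l + 1) hstar)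
        = ξ l hstar hstar * (α l g * θ g h * ψ h (v (l + 1)) * β (l + 1) h)) ∧
    -- (T)
    (∀ g h, θ g h * ∑ l ∈ Finset.Icc 1 (L - 1), ξ l g hstar
        = θ g hstar * ∑ l ∈ Finset.Icc 1 (L - 1), ξ l g h) ∧
    -- (P)
    (∀ h w, ψ h w * ∑ l ∈ Finset.Icc 1 L, γ l h * (if vstar = v l then (1 : ℝ) else 0)
        = ψ h vstar * ∑ l ∈ Finset.Icc 1 L, γ l h * (if w = v l then (1 : ℝ) else 0)) := by
  refine ⟨?_, ?_, ?_, ?_, ?_, ?_, ?_⟩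
  · intro h; rw [hα1 h, hα1 hstar]; ring
  · intro l h2 hl h; rw [hα l h2 hl h, hα l h2 hl hstar]; ring
  · intro l h1 hl h; rw [hβ l h1 hl h, hβ l h1 hl hstar]; ring
  · intro l h1 hl h
    rw [hγ l h1 hl h, hγ l h1 hl hstar]
    field_simp
  · intro l h1 hl g h
    rw [hξ l h1 hl g h, hξ l h1 hl hstar hstar]
    field_simp
  · intro g h
    rw [hθ g h, hθ g hstar]
    field_simp
  · intro h w
    rw [hψ h w, hψ h vstar]
    field_simp
end

section
/- Every positive fixed point of the Chemical Baum-Welch dynamics is a fixed point of the Baum-Welch algorithm (up to the scale invariance of the Baum-Welch algorithm). Precisely: suppose the configuration Φ = (α, β, γ, ξ, θ, ψ) has all entries strictly positive and satisfies all the balance equations (F1), (F2), (B), (G), (X), (T), (P) of the Baum-Welch reaction network. Then for all admissible indices: α_{1h} = π_h ψ_{h,v_1} · (Σ_{f∈H} α_{1f}) / (Σ_{f∈H} π_f ψ_{f,v_1}); α_{lh} = (Σ_{g∈H} α_{l−1,g}θ_{gh}ψ_{h,v_l}) · (Σ_{f∈H} α_{lf}) / (Σ_{f,g∈H} α_{l−1,g}θ_{gf}ψ_{f,v_l})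 for 2 ≤ l ≤ L; β_{lh} = (Σ_{g∈H} θ_{hg}ψ_{g,v_{l+1}}β_{l+1,g}) · (Σ_{f∈H} β_{lf}) / (Σ_{f,g∈H} θ_{fg}ψ_{g,v_{l+1}}β_{l+1,g}) for 1 ≤ l ≤ L−1; γ_{lh} = (α_{lh}β_{lh} / Σ_{g∈H} α_{lg}β_{lg}) · Σ_{g∈H} γ_{lg} for 1 ≤ l ≤ L−1; ξ_{lgh} = (α_{lg}θ_{gh}ψ_{h,v_{l+1}}β_{l+1,h} / Σ_{e,f∈H} α_{le}θ_{ef}ψ_{f,v_{l+1}}β_{l+1,f}) · Σ_{e,f∈H} ξ_{lef} for 1 ≤ l ≤ L−1; θ_{gh} = (Σ_{l=1}^{L−1} ξ_{lgh} / Σ_{l=1}^{L−1} Σ_{f∈H} ξ_{lgf}) · Σ_{f∈H} θ_{gf}; ψ_{hw} = (Σ_{l=1}^{L} γ_{lh}δ_{w,v_l} / Σ_{l=1}^{L} γ_{lh}) · Σ_{u∈V} ψ_{hu}. -/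
private lemma bw_aux {I : Type*} [Fintype I] (x d : I → ℝ) (c k : ℝ) (hc : c ≠ 0)
    (hd : 0 < ∑ i, d i) (h : ∀ i, x i * c = k * d i) (i : I) :
    x i = d i * (∑ j, x j) / (∑ j, d j) := by
  have hsum : (∑ j, x j) * c = k * ∑ j, d j := by
    rw [Finset.sum_mul, Finset.mul_sum]; exact Finset.sum_congr rfl fun j _ => h j
  rw [eq_div_iff hd.ne']
  apply mul_right_cancel₀ hc
  linear_combination (∑ j, d j) * h i - d i * hsum


/-- Every positive fixed point of the Chemical Baum-Welch dynamics is a fixed point of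
the Baum-Welch algorithm (up to the scale invariance of the Baum-Welch algorithm): if the
configuration `Φ = (α, β, γ, ξ, θ, ψ)` has all entries strictly positive and satisfies all
the balance equations (F1), (F2), (B), (G), (X), (T), (P) of the Baum-Welch reaction
network, then it satisfies the Baum-Welch fixed-point equations up to scale. -/
theorem chemical_positive_fixed_point_is_bw_fixed_point
    {H V : Type*} [Fintype H] [Fintype V] [Nonempty H] [Nonempty V] [DecidableEq V]
    (hstar : H) (vstar : V) (L : ℕ) (hL : 2 ≤ L)
    (v : ℕ → V) (π : H → ℝ) (hπ : ∀ h, 0 < π h)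
    (α β γ : ℕ → H → ℝ) (ξ : ℕ → H → H → ℝ) (θ : H → H → ℝ) (ψ : H → V → ℝ)
    -- positivity of the configuration:
    (hαpos : ∀ l, 1 ≤ l → l ≤ L → ∀ h, 0 < α l h)
    (hβpos : ∀ l, 1 ≤ l → l ≤ L → ∀ h, 0 < β l h)
    (hγpos : ∀ l, 1 ≤ l → l ≤ L → ∀ h, 0 < γ l h)
    (hξpos : ∀ l, 1 ≤ l → l ≤ L - 1 → ∀ g h, 0 < ξ l g h)
    (hθpos : ∀ g h, 0 < θ g h)
    (hψpos : ∀ h w, 0 < ψ h w)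
    -- (F1)
    (hF1 : ∀ h, α 1 h * (π hstar * ψ hstar (v 1)) = α 1 hstar * (π h * ψ h (v 1)))
    -- (F2)
    (hF2 : ∀ l, 2 ≤ l → l ≤ L → ∀ h,
      α l h * ∑ g, α (l - 1) g * θ g hstar * ψ hstar (v l)
        = α l hstar * ∑ g, α (l - 1) g * θ g h * ψ h (v l))
    -- (B)
    (hB : ∀ l, 1 ≤ l → l ≤ L - 1 → ∀ h,
      β l h * ∑ g, θ hstar g * ψ g (v (l + 1)) * β (l + 1) g
        = β l hstar * ∑ g, θ h g * ψ g (v (l + 1)) * β (l + 1) g)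
    -- (G)
    (hG : ∀ l, 1 ≤ l → l ≤ L - 1 → ∀ h,
      γ l h * (α l hstar * β l hstar) = γ l hstar * (α l h * β l h))
    -- (X)
    (hX : ∀ l, 1 ≤ l → l ≤ L - 1 → ∀ g h,
      ξ l g h * (α l hstar * θ hstar hstar * ψ hstar (v (l + 1)) * β (l + 1) hstar)
        = ξ l hstar hstar * (α l g * θ g h * ψ h (v (l + 1)) * β (l + 1) h))
    -- (T)
    (hT : ∀ g h, θ g h * ∑ l ∈ Finset.Icc 1 (L - 1), ξ l g hstar
        = θ g hstar * ∑ l ∈ Finset.Icc 1 (L - 1), ξ l g h)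
    -- (P)
    (hP : ∀ h w, ψ h w * ∑ l ∈ Finset.Icc 1 L, γ l h * (if vstar = v l then (1 : ℝ) else 0)
        = ψ h vstar * ∑ l ∈ Finset.Icc 1 L, γ l h * (if w = v l then (1 : ℝ) else 0)) :
    -- Baum-Welch fixed-point equations, up to scale:
    (∀ h, α 1 h = π h * ψ h (v 1) * (∑ f, α 1 f) / ∑ f, π f * ψ f (v 1)) ∧
    (∀ l, 2 ≤ l → l ≤ L → ∀ h,
      α l h = (∑ g, α (l - 1) g * θ g h * ψ h (v l)) * (∑ f, α l f)
          / ∑ f, ∑ g, α (l - 1) g * θ g f * ψ f (v l)) ∧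
    (∀ l, 1 ≤ l → l ≤ L - 1 → ∀ h,
      β l h = (∑ g, θ h g * ψ g (v (l + 1)) * β (l + 1) g) * (∑ f, β l f)
          / ∑ f, ∑ g, θ f g * ψ g (v (l + 1)) * β (l + 1) g) ∧
    (∀ l, 1 ≤ l → l ≤ L - 1 → ∀ h,
      γ l h = (α l h * β l h / ∑ g, α l g * β l g) * ∑ g, γ l g) ∧
    (∀ l, 1 ≤ l → l ≤ L - 1 → ∀ g h,
      ξ l g h = (α l g * θ g h * ψ h (v (l + 1)) * β (l + 1) h
            / ∑ e, ∑ f, α l e * θ e f * ψ f (v (l + 1)) * β (l + 1) f)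
          * ∑ e, ∑ f, ξ l e f) ∧
    (∀ g h, θ g h
      = ((∑ l ∈ Finset.Icc 1 (L - 1), ξ l g h)
          / ∑ l ∈ Finset.Icc 1 (L - 1), ∑ f, ξ l g f) * ∑ f, θ g f) ∧
    (∀ h w, ψ h w
      = ((∑ l ∈ Finset.Icc 1 L, γ l h * (if w = v l then (1 : ℝ) else 0))
          / ∑ l ∈ Finset.Icc 1 L, γ l h) * ∑ u, ψ h u) := by

  have hIcc : (Finset.Icc 1 (L-1)).Nonempty := by
    refine ⟨1, ?_⟩; simp only [Finset.mem_Icc]; omega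
  have hIccL : (Finset.Icc 1 L).Nonempty := by
    refine ⟨1, ?_⟩; simp only [Finset.mem_Icc]; omega
  refine ⟨?_, ?_, ?_, ?_, ?_, ?_, ?_⟩
  · -- F1
    intro h
    refine bw_aux (α 1) (fun f => π f * ψ f (v 1)) _ (α 1 hstar) ?_ ?_ hF1 h
    · exact (mul_pos (hπ hstar) (hψpos hstar (v 1))).ne'
    · exact Finset.sum_pos (fun f _ => mul_pos (hπ f) (hψpos f (v 1))) Finset.univ_nonempty
  · -- F2
    intro l hl2 hlL h
    have hpos : ∀ g f, 0 < α (l-1) g * θ g f * ψ f (v l) := fun g f =>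
      mul_pos (mul_pos (hαpos (l-1) (by omega) (by omega) g) (hθpos g f)) (hψpos f (v l))
    refine bw_aux (α l) (fun f => ∑ g, α (l-1) g * θ g f * ψ f (v l)) _ (α l hstar)
      ?_ ?_ (hF2 l hl2 hlL) h
    · exact (Finset.sum_pos (fun g _ => hpos g hstar) Finset.univ_nonempty).ne'
    · exact Finset.sum_pos (fun f _ => Finset.sum_pos (fun g _ => hpos g f)
        Finset.univ_nonempty) Finset.univ_nonempty
  · -- B
    intro l hl1 hlL h
    have hpos : ∀ f g, 0 < θ f g * ψ g (v (l+1)) * β (l+1) g := fun f g =>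
      mul_pos (mul_pos (hθpos f g) (hψpos g (v (l+1)))) (hβpos (l+1) (by omega) (by omega) g)
    refine bw_aux (β l) (fun f => ∑ g, θ f g * ψ g (v (l+1)) * β (l+1) g) _ (β l hstar)
      ?_ ?_ (hB l hl1 hlL) h
    · exact (Finset.sum_pos (fun g _ => hpos hstar g) Finset.univ_nonempty).ne'
    · exact Finset.sum_pos (fun f _ => Finset.sum_pos (fun g _ => hpos f g)
        Finset.univ_nonempty) Finset.univ_nonempty
  · -- G
    intro l hl1 hlL h
    have hpos : ∀ g, 0 < α l g * β l g := fun g =>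
      mul_pos (hαpos l (by omega) (by omega) g) (hβpos l (by omega) (by omega) g)
    rw [div_mul_eq_mul_div]
    exact bw_aux (γ l) (fun g => α l g * β l g) _ (γ l hstar) (hpos hstar).ne'
      (Finset.sum_pos (fun g _ => hpos g) Finset.univ_nonempty) (hG l hl1 hlL) h
  · -- X
    intro l hl1 hlL g h
    have hpos : ∀ e f, 0 < α l e * θ e f * ψ f (v (l+1)) * β (l+1) f := fun e f =>
      mul_pos (mul_pos (mul_pos (hαpos l (by omega) (by omega) e) (hθpos e f))
        (hψpos f (v (l+1)))) (hβpos (l+1) (by omega) (by omega) f)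
    have e1 : (∑ p : H × H, ξ l p.1 p.2) = ∑ e, ∑ f, ξ l e f :=
      Fintype.sum_prod_type _
    have e2 : (∑ p : H × H, α l p.1 * θ p.1 p.2 * ψ p.2 (v (l+1)) * β (l+1) p.2)
        = ∑ e, ∑ f, α l e * θ e f * ψ f (v (l+1)) * β (l+1) f :=
      Fintype.sum_prod_type _
    rw [div_mul_eq_mul_div, ← e1, ← e2]
    exact bw_aux (fun p : H × H => ξ l p.1 p.2)
      (fun p : H × H => α l p.1 * θ p.1 p.2 * ψ p.2 (v (l+1)) * β (l+1) p.2)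
      _ (ξ l hstar hstar) (hpos hstar hstar).ne'
      (Finset.sum_pos (fun p _ => hpos p.1 p.2) Finset.univ_nonempty)
      (fun p => hX l hl1 hlL p.1 p.2) (g, h)
  · -- T
    intro g h
    have hpos : ∀ f, 0 < ∑ l ∈ Finset.Icc 1 (L-1), ξ l g f := fun f =>
      Finset.sum_pos (fun l hl => by
        simp only [Finset.mem_Icc] at hl; exact hξpos l hl.1 hl.2 g f) hIcc
    rw [div_mul_eq_mul_div, Finset.sum_comm]
    exact bw_aux (θ g) (fun f => ∑ l ∈ Finset.Icc 1 (L-1), ξ l g f) _ (θ g hstar)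
      (hpos hstar).ne' (Finset.sum_pos (fun f _ => hpos f) Finset.univ_nonempty)
      (hT g) h
  · -- P
    intro h w
    have hγ : 0 < ∑ l ∈ Finset.Icc 1 L, γ l h :=
      Finset.sum_pos (fun l hl => by
        simp only [Finset.mem_Icc] at hl; exact hγpos l hl.1 hl.2 h) hIccL
    have hdsum : (∑ u : V, ∑ l ∈ Finset.Icc 1 L, γ l h * (if u = v l then (1:ℝ) else 0))
        = ∑ l ∈ Finset.Icc 1 L, γ l h := by
      rw [Finset.sum_comm]
      refine Finset.sum_congr rfl fun l _ => ?_
      rw [← Finset.mul_sum]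
      simp
    have hdpos : 0 < ∑ u : V, ∑ l ∈ Finset.Icc 1 L, γ l h * (if u = v l then (1:ℝ) else 0) := by
      rw [hdsum]; exact hγ
    have hc : (∑ l ∈ Finset.Icc 1 L, γ l h * (if vstar = v l then (1:ℝ) else 0)) ≠ 0 := by
      intro hc0
      have key : (∑ u : V, ψ h u) *
          (∑ l ∈ Finset.Icc 1 L, γ l h * (if vstar = v l then (1:ℝ) else 0))
          = ψ h vstar * ∑ u : V, ∑ l ∈ Finset.Icc 1 L, γ l h * (if u = v l then (1:ℝ) else 0) := by
        rw [Finset.sum_mul, Finset.mul_sum]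
        exact Finset.sum_congr rfl fun u _ => hP h u
      rw [hc0, mul_zero] at key
      nlinarith [hdpos, hψpos h vstar]
    have key := bw_aux (ψ h)
      (fun u => ∑ l ∈ Finset.Icc 1 L, γ l h * (if u = v l then (1:ℝ) else 0))
      _ (ψ h vstar) hc hdpos (hP h) w
    rw [div_mul_eq_mul_div, ← hdsum]
    exact key
end

section
/- Let A be an n×n real matrix, let 0 < r ≤ n, and let W' be an r×(n−r) real matrix such that the r×n matrix W = (W' I_r) (the block concatenation of W' with the r×r identity) satisfies W·A = 0. Write A in block form A = [[A₁₁, A₁₂],[A₂₁, A₂₂]] where A₁₁ is (n−r)×(n−r), A₁₂ is (n−r)×r, A₂₁ is r×(n−r), and A₂₂ is r×r. Then for every λ ∈ ℝ, det(A − λ·I_n) = (−1)^r · λ^r · det(A₁₁ − A₁₂·W' − λ·I_{n−r}). In particular, the n−r eigenvalues (with multiplicity) of A₁₁ − A₁₂W' are the eigenvalues of A except for r zero eigenvalues. -/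
open Matrix

/-- Let `A` be an `n × n` real matrix (with `n = m + r`, `0 < r`, indices split as
`Fin m ⊕ Fin r`), and let `W'` be an `r × m` real matrix such that the `r × n` matrix
`W = (W'  I_r)` satisfies `W * A = 0`.  Then for every `λ ∈ ℝ`,
`det (A - λ • I_n) = (-1)^r * λ^r * det (A₁₁ - A₁₂ * W' - λ • I_m)`, where `A₁₁`, `A₁₂`
are the blocks of `A`.  In particular, the `m` eigenvalues (with multiplicity) of
`A₁₁ - A₁₂ * W'` are the eigenvalues of `A` except for `r` zero eigenvalues. -/
theorem det_eq_of_left_kernel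
    (m r : ℕ) (hr : 0 < r)
    (A : Matrix (Fin m ⊕ Fin r) (Fin m ⊕ Fin r) ℝ)
    (W' : Matrix (Fin r) (Fin m) ℝ)
    (hW : Matrix.fromCols W' (1 : Matrix (Fin r) (Fin r) ℝ) * A = 0) :
    ∀ lam : ℝ,
      (A - lam • 1).det
        = (-1) ^ r * lam ^ r
            * (A.toBlocks₁₁ - A.toBlocks₁₂ * W' - lam • (1 : Matrix (Fin m) (Fin m) ℝ)).det := by
  intro lam
  set A₁₁ := A.toBlocks₁₁
  set A₁₂ := A.toBlocks₁₂
  set A₂₁ := A.toBlocks₂₁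
  set A₂₂ := A.toBlocks₂₂
  have hA : A = fromBlocks A₁₁ A₁₂ A₂₁ A₂₂ := (fromBlocks_toBlocks A).symm
  rw [hA, fromCols_mul_fromBlocks] at hW
  have h1 : W' * A₁₁ + A₂₁ = 0 := by
    have := congrArg (fun M => Matrix.of fun i j => M i (Sum.inl j)) hW
    ext i j
    have := congrFun (congrFun this i) j
    simpa [fromCols] using this
  have h2 : W' * A₁₂ + A₂₂ = 0 := by
    ext i j
    have := congrFun (congrFun (congrArg (fun M => Matrix.of fun i j => M i (Sum.inr j)) hW) i) j
    simpa [fromCols] using this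
  set P : Matrix (Fin m ⊕ Fin r) (Fin m ⊕ Fin r) ℝ := fromBlocks 1 0 W' 1
  set Q : Matrix (Fin m ⊕ Fin r) (Fin m ⊕ Fin r) ℝ := fromBlocks 1 0 (-W') 1
  have hPdet : P.det = 1 := by simp [P, det_fromBlocks_zero₁₂]
  have hQdet : Q.det = 1 := by simp [Q, det_fromBlocks_zero₁₂]
  have key : P * (A - lam • 1) * Q
      = fromBlocks (A₁₁ - A₁₂ * W' - lam • 1) A₁₂ 0 ((-lam) • 1) := by
    have h1' : A₂₁ = -(W' * A₁₁) := by linear_combination (norm := abel) h1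
    have h2' : A₂₂ = -(W' * A₁₂) := by linear_combination (norm := abel) h2
    rw [hA, h1', h2']
    have : (lam • (1 : Matrix (Fin m ⊕ Fin r) (Fin m ⊕ Fin r) ℝ))
        = fromBlocks (lam • 1) 0 0 (lam • 1) := by
      rw [← fromBlocks_one, fromBlocks_smul]; simp
    rw [this, sub_eq_add_neg, fromBlocks_neg, fromBlocks_add]
    simp only [P, Q, fromBlocks_multiply, Matrix.mul_one, Matrix.one_mul, Matrix.zero_mul,
      Matrix.mul_zero, Matrix.mul_smul, Matrix.smul_mul, Matrix.mul_add, Matrix.add_mul,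
      Matrix.mul_neg, Matrix.neg_mul, smul_neg, neg_smul]
    rw [fromBlocks_inj]
    refine ⟨?_, ?_, ?_, ?_⟩ <;> module
  have : (A - lam • 1).det = (P * (A - lam • 1) * Q).det := by
    rw [det_mul, det_mul, hPdet, hQdet]; ring
  rw [this, key, det_fromBlocks_zero₂₁, det_smul, det_one]
  simp [neg_pow lam r]
  ring
end

section
/- The Laplacian matrix of a strongly connected network has all eigenvalues zero or with negative real part: let A be an n×n real matrix such that A_{ij} ≥ 0 for all i ≠ j, every column of A sums to zero, and the directed graph on {1,…,n} with an edge from j to i whenever i ≠ j and A_{ij} > 0 is strongly connected. Then every complex eigenvalue μ of A satisfies μ = 0 or Re(μ) < 0. -/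
/-- The Laplacian matrix of a strongly connected network has all eigenvalues zero or with
negative real part: if `A` is an `n × n` real matrix with nonnegative off-diagonal entries,
columns summing to zero, and the directed graph with an edge from `j` to `i` whenever
`i ≠ j` and `A i j > 0` strongly connected, then every complex eigenvalue `μ` of `A`
satisfies `μ = 0` or `Re μ < 0`. -/
theorem laplacian_eigenvalues_nonpositive
    (n : ℕ) (A : Matrix (Fin n) (Fin n) ℝ)
    (hoff : ∀ i j, i ≠ j → 0 ≤ A i j)
    (hcol : ∀ j, ∑ i, A i j = 0)
    (hconn : ∀ i j : Fin n,
      Relation.ReflTransGen (fun p q : Fin n => p ≠ q ∧ 0 < A q p) j i) :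
    ∀ μ : ℂ, (A.map Complex.ofReal - μ • 1).det = 0 → μ = 0 ∨ μ.re < 0 := by
  intro μ hdet
  by_cases hre : μ.re < 0
  · exact Or.inr hre
  push_neg at hre
  left
  obtain ⟨v, hv0, hv⟩ := Matrix.exists_vecMul_eq_zero_iff.mpr hdet
  have hne : (Finset.univ : Finset (Fin n)).Nonempty := by
    rcases Function.ne_iff.mp hv0 with ⟨i, -⟩
    exact ⟨i, Finset.mem_univ i⟩
  obtain ⟨k, -, hk⟩ := Finset.exists_max_image Finset.univ (fun i => ‖v i‖) hne
  have hvk : 0 < ‖v k‖ := by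
    rcases Function.ne_iff.mp hv0 with ⟨i, hi⟩
    exact lt_of_lt_of_le (by simpa using hi) (hk i (Finset.mem_univ i))
  have heq : ∑ i, v i * (A i k : ℂ) = μ * v k := by
    have := congrFun hv k
    simp only [Matrix.vecMul, dotProduct, Matrix.sub_apply, Matrix.map_apply,
      Matrix.smul_apply, Matrix.one_apply, Pi.zero_apply, smul_eq_mul, mul_sub] at this
    rw [Finset.sum_sub_distrib] at this
    have h2 : ∑ i, v i * (μ * if i = k then 1 else 0) = μ * v k := by
      simp [Finset.sum_ite_eq', mul_comm]
    rw [h2] at this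
    exact sub_eq_zero.mp this
  have hsplit : (μ - (A k k : ℂ)) * v k = ∑ i ∈ Finset.univ.erase k, v i * (A i k : ℂ) := by
    rw [← Finset.add_sum_erase Finset.univ (fun i => v i * (A i k : ℂ)) (Finset.mem_univ k)]
      at heq
    linear_combination -heq
  set c : ℝ := A k k with hc
  have hcsum : ∑ i ∈ Finset.univ.erase k, A i k = -c := by
    have h0 := hcol k
    rw [← Finset.add_sum_erase Finset.univ (fun i => A i k) (Finset.mem_univ k)] at h0
    linarith
  have hcle : c ≤ 0 := by
    have hnn : 0 ≤ ∑ i ∈ Finset.univ.erase k, A i k :=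
      Finset.sum_nonneg fun i hi => hoff i k (Finset.ne_of_mem_erase hi)
    linarith [hcsum ▸ hnn]
  have habs : ‖μ - (c : ℂ)‖ ≤ -c := by
    have h1 : ‖μ - (c : ℂ)‖ * ‖v k‖
        ≤ ∑ i ∈ Finset.univ.erase k, ‖v i‖ * A i k := by
      rw [← norm_mul, hsplit]
      refine (norm_sum_le _ _).trans ?_
      refine Finset.sum_le_sum fun i hi => ?_
      rw [norm_mul, Complex.norm_real, Real.norm_eq_abs,
        abs_of_nonneg (hoff i k (Finset.ne_of_mem_erase hi))]
    have h2 : ∑ i ∈ Finset.univ.erase k, ‖v i‖ * A i k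
        ≤ ‖v k‖ * (-c) := by
      rw [← hcsum, Finset.mul_sum]
      exact Finset.sum_le_sum fun i hi => mul_le_mul_of_nonneg_right
        (hk i (Finset.mem_univ i)) (hoff i k (Finset.ne_of_mem_erase hi))
    nlinarith [h1.trans h2, hvk, norm_nonneg (μ - (c : ℂ))]
  have hsq : (μ.re - c) ^ 2 + μ.im ^ 2 ≤ c ^ 2 := by
    have h2 : ‖μ - (c : ℂ)‖ ^ 2 ≤ (-c) ^ 2 := by
      nlinarith [norm_nonneg (μ - (c : ℂ))]
    rw [Complex.sq_norm] at h2
    simp only [Complex.normSq_apply, Complex.sub_re, Complex.sub_im, Complex.ofReal_re,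
      Complex.ofReal_im, sub_zero] at h2
    nlinarith [h2]
  have h3 : 0 ≤ -c * μ.re := mul_nonneg (neg_nonneg.mpr hcle) hre
  refine Complex.ext ?_ ?_ <;> simp only [Complex.zero_re, Complex.zero_im] <;>
    nlinarith [hsq, hre, hcle, h3, sq_nonneg μ.im, sq_nonneg μ.re]
end

section
/- Let C be an n×n real matrix all of whose complex eigenvalues have strictly negative real part, and let λ₁ be an eigenvalue of C with the largest real part. Then for every γ with 0 < γ < −Re(λ₁) there exists K₂ > 0 such that ‖exp(t·C)‖ ≤ K₂ e^{−γ t} for all t ≥ 0. -/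
open scoped Matrix

attribute [local instance] Matrix.linftyOpNormedAddCommGroup

section Aux

open NormedSpace Polynomial Filter

attribute [local instance] Matrix.linftyOpNormedRing Matrix.linftyOpNormedAlgebra

variable {n : ℕ}

private lemma aux_spec_iff (A : Matrix (Fin n) (Fin n) ℂ) (μ : ℂ) :
    μ ∈ spectrum ℂ A ↔ (A - μ • 1).det = 0 := by
  rw [spectrum.mem_iff, Algebra.algebraMap_eq_smul_one, ← neg_sub A (μ • (1 : Matrix (Fin n) (Fin n) ℂ)),
    Matrix.isUnit_iff_isUnit_det, Matrix.det_neg, isUnit_iff_ne_zero, not_ne_iff, mul_eq_zero]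
  simp [pow_ne_zero]

private lemma aux_pow_mulVec (A : Matrix (Fin n) (Fin n) ℂ) (μ : ℂ) (v : Fin n → ℂ)
    (hv : A *ᵥ v = μ • v) (k : ℕ) : (A ^ k) *ᵥ v = (μ ^ k) • v := by
  induction k with
  | zero => simp [Matrix.one_mulVec]
  | succ k ih =>
      rw [pow_succ, ← Matrix.mulVec_mulVec, hv, Matrix.mulVec_smul, ih, smul_smul, pow_succ,
        mul_comm]

private lemma aux_aeval_mulVec (A : Matrix (Fin n) (Fin n) ℂ) (μ : ℂ) (v : Fin n → ℂ)
    (hv : A *ᵥ v = μ • v) (p : ℂ[X]) : (aeval A p) *ᵥ v = (p.eval μ) • v := by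
  induction p using Polynomial.induction_on' with
  | add p q hp hq => rw [map_add, Matrix.add_mulVec, hp, hq, eval_add, add_smul]
  | monomial k a =>
      rw [aeval_monomial, eval_monomial, ← Algebra.smul_def, Matrix.smul_mulVec,
        aux_pow_mulVec A μ v hv k, smul_smul]

private lemma aux_exp_mulVec (A : Matrix (Fin n) (Fin n) ℂ) (μ : ℂ) (v : Fin n → ℂ)
    (hv : A *ᵥ v = μ • v) : (exp A) *ᵥ v = Complex.exp μ • v := by
  let L0 : Matrix (Fin n) (Fin n) ℂ →ₗ[ℂ] (Fin n → ℂ) :=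
    { toFun := fun M => M *ᵥ v
      map_add' := fun M N => Matrix.add_mulVec M N v
      map_smul' := fun a M => Matrix.smul_mulVec a M v }
  let L : Matrix (Fin n) (Fin n) ℂ →L[ℂ] (Fin n → ℂ) := LinearMap.toContinuousLinearMap L0
  have hLk : ∀ M : Matrix (Fin n) (Fin n) ℂ, L M = M *ᵥ v := fun M => rfl
  have h1 : HasSum (fun k : ℕ => L ((k.factorial : ℂ)⁻¹ • A ^ k)) (L (exp A)) :=
    (exp_series_hasSum_exp' (𝕂 := ℂ) A).mapL L
  have h3 : (fun k : ℕ => L ((k.factorial : ℂ)⁻¹ • A ^ k))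
      = fun k : ℕ => ((k.factorial : ℂ)⁻¹ • μ ^ k) • v := by
    funext k
    rw [map_smul, hLk, aux_pow_mulVec A μ v hv k, smul_smul, smul_eq_mul]
  rw [h3, hLk] at h1
  have h2 : HasSum (fun k : ℕ => ((k.factorial : ℂ)⁻¹ • μ ^ k) • v) (exp μ • v) :=
    (exp_series_hasSum_exp' (𝕂 := ℂ) μ).smul_const v
  rw [← h2.unique h1, Complex.exp_eq_exp_ℂ]

private lemma aux_exp_mem (A : Matrix (Fin n) (Fin n) ℂ) :
    ∃ p : ℂ[X], aeval A p = exp A := by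
  have h : exp A ∈ Subalgebra.toSubmodule (Algebra.adjoin ℂ {A}) := by
    have hclosed : IsClosed
        ((Subalgebra.toSubmodule (Algebra.adjoin ℂ {A}) : Submodule ℂ _) :
          Set (Matrix (Fin n) (Fin n) ℂ)) :=
      Submodule.closed_of_finiteDimensional _
    have hsum := (exp_series_hasSum_exp' (𝕂 := ℂ) A).tendsto_sum_nat
    refine hclosed.mem_of_tendsto hsum (Filter.Eventually.of_forall fun N => ?_)
    refine Submodule.sum_mem _ fun k _ => Submodule.smul_mem _ _ ?_
    exact pow_mem (Algebra.subset_adjoin (Set.mem_singleton A)) k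
  rw [Subalgebra.mem_toSubmodule, Algebra.adjoin_singleton_eq_range_aeval] at h
  obtain ⟨p, hp⟩ := h
  exact ⟨p, hp⟩

private lemma aux_spectrum_exp (hn : 0 < n) (A : Matrix (Fin n) (Fin n) ℂ) (μ : ℂ)
    (hμ : μ ∈ spectrum ℂ (exp A)) : ∃ lam ∈ spectrum ℂ A, μ = Complex.exp lam := by
  obtain ⟨p, hp⟩ := aux_exp_mem A
  haveI : Nonempty (Fin n) := Fin.pos_iff_nonempty.mp hn
  have hne := spectrum.nonempty_of_isAlgClosed_of_finiteDimensional ℂ A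
  rw [← hp, spectrum.map_polynomial_aeval_of_nonempty A p hne] at hμ
  obtain ⟨lam, hlam, hev⟩ := hμ
  refine ⟨lam, hlam, ?_⟩
  have hdet : (A - lam • 1).det = 0 := (aux_spec_iff A lam).mp hlam
  obtain ⟨v, hv0, hv⟩ := Matrix.exists_mulVec_eq_zero_iff.mpr hdet
  have hv' : A *ᵥ v = lam • v := by
    rw [Matrix.sub_mulVec, sub_eq_zero] at hv
    rw [hv, Matrix.smul_mulVec, Matrix.one_mulVec]
  have h1 := aux_aeval_mulVec A lam v hv' p
  have h2 := aux_exp_mulVec A lam v hv'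
  rw [hp] at h1
  rw [h1] at h2
  have h3 : (p.eval lam - Complex.exp lam) • v = 0 := by rw [sub_smul, h2, sub_self]
  rcases smul_eq_zero.mp h3 with h | h
  · rw [← hev]; simpa using sub_eq_zero.mp h
  · exact absurd h hv0

private lemma aux_norm_pow (hn : 0 < n) (A : Matrix (Fin n) (Fin n) ℂ) (b : ℝ)
    (hb : ∀ lam ∈ spectrum ℂ A, lam.re ≤ b) {r : ℝ} (hr : Real.exp b < r) :
    ∃ M : ℕ, ∀ m : ℕ, M ≤ m → ‖(exp A) ^ m‖ ≤ r ^ m := by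
  have hρ : spectralRadius ℂ (exp A) ≤ ENNReal.ofReal (Real.exp b) := by
    refine iSup₂_le fun μ hμ => ?_
    obtain ⟨lam, hlam, rfl⟩ := aux_spectrum_exp hn A μ hμ
    rw [← enorm_eq_nnnorm, ← ofReal_norm]
    refine ENNReal.ofReal_le_ofReal ?_
    rw [Complex.norm_exp]
    exact Real.exp_le_exp.mpr (hb lam hlam)
  have hlt : spectralRadius ℂ (exp A) < ENNReal.ofReal r :=
    lt_of_le_of_lt hρ ((ENNReal.ofReal_lt_ofReal_iff ((Real.exp_pos b).trans hr)).mpr hr)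
  have hev := (spectrum.pow_nnnorm_pow_one_div_tendsto_nhds_spectralRadius
    (exp A)).eventually_lt_const hlt
  obtain ⟨M, hM⟩ := Filter.eventually_atTop.mp hev
  refine ⟨max M 1, fun m hm => ?_⟩
  have hm1 : (1 : ℕ) ≤ m := le_trans (le_max_right _ _) hm
  have h1 : (‖(exp A) ^ m‖₊ : ENNReal) ^ (1 / (m : ℝ)) < ENNReal.ofReal r :=
    hM m (le_trans (le_max_left _ _) hm)
  have h2 : ((‖(exp A) ^ m‖₊ : ENNReal) ^ (1 / (m : ℝ))) ^ (m : ℝ)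
      < (ENNReal.ofReal r) ^ (m : ℝ) :=
    ENNReal.rpow_lt_rpow h1 (by positivity)
  have hm0 : (m : ℝ) ≠ 0 := by positivity
  rw [← ENNReal.rpow_mul, one_div, inv_mul_cancel₀ hm0, ENNReal.rpow_one,
    ENNReal.rpow_natCast, ← ENNReal.ofReal_pow (le_of_lt ((Real.exp_pos b).trans hr)),
    ← enorm_eq_nnnorm, ← ofReal_norm] at h2
  exact le_of_lt ((ENNReal.ofReal_lt_ofReal_iff_of_nonneg (norm_nonneg _)).mp h2)

private lemma aux_norm_map (M : Matrix (Fin n) (Fin n) ℝ) :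
    ‖M.map Complex.ofReal‖ = ‖M‖ := by
  rw [Matrix.linfty_opNorm_def, Matrix.linfty_opNorm_def]
  congr 1
  refine Finset.sup_congr rfl fun i _ => Finset.sum_congr rfl fun j _ => ?_
  simp [Matrix.map_apply]

private lemma aux_exp_map (M : Matrix (Fin n) (Fin n) ℝ) :
    (exp M).map Complex.ofReal = exp (M.map Complex.ofReal) := by
  have hcont : Continuous fun M : Matrix (Fin n) (Fin n) ℝ =>
      (Complex.ofRealHom.mapMatrix M : Matrix (Fin n) (Fin n) ℂ) :=
    AddMonoidHomClass.continuous_of_bound (Complex.ofRealHom.mapMatrix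
      (m := Fin n)) 1 fun M => by
        rw [one_mul]
        exact le_of_eq (aux_norm_map M)
  have h := NormedSpace.map_exp (Complex.ofRealHom.mapMatrix (m := Fin n)) hcont M
  have h2 : (exp (M.map Complex.ofReal) : Matrix (Fin n) (Fin n) ℂ)
      = exp (M.map Complex.ofReal) := by
      rfl
  rw [← h2]
  exact h

-- the full complex-side estimate
private lemma aux_main (hn : 0 < n) (C : Matrix (Fin n) (Fin n) ℝ)
    (hmax : ∀ μ : ℂ, (C.map Complex.ofReal - μ • 1).det = 0 → μ.re ≤ lam1re)
    {γ γ' : ℝ} (hγ0 : 0 < γ) (hγγ' : γ < γ') (hγ' : γ' < -lam1re) :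
    ∃ K₂ : ℝ, 0 < K₂ ∧ ∀ t : ℝ, 0 ≤ t →
      ‖exp ((t : ℂ) • C.map Complex.ofReal)‖ ≤ K₂ * Real.exp (-γ * t) := by
  set A : Matrix (Fin n) (Fin n) ℂ := C.map Complex.ofReal with hA
  have hb : ∀ lam ∈ spectrum ℂ A, lam.re ≤ lam1re := fun lam hlam =>
    hmax lam ((aux_spec_iff A lam).mp hlam)
  have hr : Real.exp lam1re < Real.exp (-γ') := Real.exp_lt_exp.mpr (by linarith)
  obtain ⟨M, hM⟩ := aux_norm_pow hn A lam1re hb hr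
  -- continuity of t ↦ exp ((t:ℂ) • A)
  have hcont : Continuous fun s : ℝ => exp ((s : ℂ) • A) :=
    exp_continuous.comp ((Complex.continuous_ofReal).smul continuous_const)
  -- bound on [0,1]
  obtain ⟨c₁, hc₁⟩ := (isCompact_Icc (a := (0:ℝ)) (b := 1)).exists_bound_of_continuousOn
    hcont.continuousOn
  obtain ⟨c₂, hc₂⟩ := (isCompact_Icc (a := (0:ℝ)) (b := (M:ℝ))).exists_bound_of_continuousOn
    hcont.continuousOn
  have hc₁0 : 0 ≤ c₁ := le_trans (norm_nonneg _) (hc₁ 0 (by constructor <;> norm_num))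
  have hc₂0 : 0 ≤ c₂ := le_trans (norm_nonneg _) (hc₂ 0 (by constructor <;> norm_num))
  set K : ℝ := max (c₂ * Real.exp (γ * M)) (c₁ * Real.exp γ') + 1 with hK
  have hKpos : 0 < K := by positivity
  refine ⟨K, hKpos, fun t ht => ?_⟩
  have hKle : ∀ x : ℝ, x ≤ max (c₂ * Real.exp (γ * M)) (c₁ * Real.exp γ') → x ≤ K := by
    intro x hx; rw [hK]; linarith
  rcases le_or_gt t (M : ℝ) with htM | htM
  · -- small t: compact bound
    have h1 : ‖exp ((t : ℂ) • A)‖ ≤ c₂ := hc₂ t ⟨ht, htM⟩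
    have h2 : Real.exp (γ * M) * Real.exp (-γ * t) ≥ 1 := by
      rw [← Real.exp_add]
      refine Real.one_le_exp_iff.mpr ?_  -- maybe named differently
      nlinarith
    calc ‖exp ((t : ℂ) • A)‖ ≤ c₂ := h1
      _ ≤ c₂ * (Real.exp (γ * M) * Real.exp (-γ * t)) := le_mul_of_one_le_right hc₂0 h2
      _ = c₂ * Real.exp (γ * M) * Real.exp (-γ * t) := by ring
      _ ≤ K * Real.exp (-γ * t) := by
          have := hKle _ (le_max_left (c₂ * Real.exp (γ * M)) (c₁ * Real.exp γ'))
          have hexp : (0:ℝ) < Real.exp (-γ * t) := Real.exp_pos _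
          nlinarith
  · -- large t
    set m : ℕ := ⌊t⌋₊ with hm
    have hmM : M ≤ m := Nat.le_floor (le_of_lt htM)
    have hms : (m : ℝ) ≤ t := Nat.floor_le ht
    have hts : t < (m : ℝ) + 1 := Nat.lt_floor_add_one t
    have hsplit : (t : ℂ) • A = ((m : ℝ) : ℂ) • A + (((t - m : ℝ)) : ℂ) • A := by
      rw [← add_smul, ← Complex.ofReal_add]
      norm_num
    have hcomm : Commute (((m : ℝ) : ℂ) • A) ((((t - m : ℝ)) : ℂ) • A) :=
      ((Commute.refl A).smul_left _).smul_right _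
    have hexp_split : exp ((t : ℂ) • A)
        = exp (((m : ℝ) : ℂ) • A) * exp ((((t - m : ℝ)) : ℂ) • A) := by
      rw [hsplit, Matrix.exp_add_of_commute _ _ hcomm]
    have hpow : exp (((m : ℝ) : ℂ) • A) = (exp A) ^ m := by
      have : (((m : ℝ) : ℂ)) • A = (m : ℕ) • A := by
        push_cast
        rw [Nat.cast_smul_eq_nsmul]
      rw [this, Matrix.exp_nsmul]
    have hnorm1 : ‖(exp A) ^ m‖ ≤ Real.exp (-γ') ^ m := hM m hmM
    have hs01 : t - m ∈ Set.Icc (0:ℝ) 1 := ⟨by linarith, by linarith⟩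
    have hnorm2 : ‖exp ((((t - m : ℝ)) : ℂ) • A)‖ ≤ c₁ := hc₁ _ hs01
    have hstep : ‖exp ((t : ℂ) • A)‖ ≤ Real.exp (-γ') ^ m * c₁ := by
      rw [hexp_split]
      calc ‖exp (((m : ℝ) : ℂ) • A) * exp ((((t - m : ℝ)) : ℂ) • A)‖
          ≤ ‖exp (((m : ℝ) : ℂ) • A)‖ * ‖exp ((((t - m : ℝ)) : ℂ) • A)‖ := norm_mul_le _ _
        _ ≤ Real.exp (-γ') ^ m * c₁ := by
            refine mul_le_mul ?_ hnorm2 (norm_nonneg _) (by positivity)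
            rw [hpow]; exact hnorm1
    have hexpm : Real.exp (-γ') ^ m = Real.exp (-γ' * m) := by
      rw [← Real.exp_nat_mul]; ring_nf
    have hfinal : Real.exp (-γ' * m) ≤ Real.exp γ' * Real.exp (-γ * t) := by
      rw [← Real.exp_add]
      refine Real.exp_le_exp.mpr ?_
      have h1 : -γ' * m ≤ -γ' * (t - 1) := by nlinarith [hγ0]
      nlinarith
    calc ‖exp ((t : ℂ) • A)‖ ≤ Real.exp (-γ') ^ m * c₁ := hstep
      _ = c₁ * Real.exp (-γ' * m) := by rw [hexpm]; ring
      _ ≤ c₁ * (Real.exp γ' * Real.exp (-γ * t)) :=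
          mul_le_mul_of_nonneg_left hfinal hc₁0
      _ = c₁ * Real.exp γ' * Real.exp (-γ * t) := by ring
      _ ≤ K * Real.exp (-γ * t) := by
          have h := hKle _ (le_max_right (c₂ * Real.exp (γ * M)) (c₁ * Real.exp γ'))
          have hexp : (0:ℝ) < Real.exp (-γ * t) := Real.exp_pos _
          nlinarith

end Aux

/-- If all complex eigenvalues of the real matrix `C` have strictly negative real part and
`λ₁` is an eigenvalue of largest real part, then for every `0 < γ < -Re λ₁` there exists
`K₂ > 0` with `‖exp (t • C)‖ ≤ K₂ * exp (-γ * t)` for all `t ≥ 0`.  Here the matrix norm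
is the operator norm induced by the sup norm on `ℝⁿ`. -/
theorem matrix_exp_decay_of_eigenvalues_negative
    (n : ℕ) (C : Matrix (Fin n) (Fin n) ℝ)
    (hneg : ∀ μ : ℂ, (C.map Complex.ofReal - μ • 1).det = 0 → μ.re < 0)
    (lam1 : ℂ) (hlam1 : (C.map Complex.ofReal - lam1 • 1).det = 0)
    (hmax : ∀ μ : ℂ, (C.map Complex.ofReal - μ • 1).det = 0 → μ.re ≤ lam1.re) :
    ∀ γ : ℝ, 0 < γ → γ < -lam1.re →
      ∃ K₂ : ℝ, 0 < K₂ ∧ ∀ t : ℝ, 0 ≤ t →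
        ‖NormedSpace.exp (t • C)‖ ≤ K₂ * Real.exp (-γ * t) := by
  intro γ hγ0 hγ
  rcases Nat.eq_zero_or_pos n with hn | hn
  · exfalso
    subst hn
    haveI : IsEmpty (Fin 0) := by infer_instance
    rw [Matrix.det_isEmpty] at hlam1
    exact one_ne_zero hlam1
  have hγ' : γ < (γ + (-lam1.re)) / 2 := by linarith
  have hγ'' : (γ + (-lam1.re)) / 2 < -lam1.re := by linarith
  obtain ⟨K₂, hK₂, hbound⟩ := aux_main hn C hmax hγ0 hγ' hγ''
  refine ⟨K₂, hK₂, fun t ht => ?_⟩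
  have heq : ‖NormedSpace.exp (t • C)‖ = ‖NormedSpace.exp ((t : ℂ) • C.map Complex.ofReal)‖ := by
    rw [← aux_norm_map (NormedSpace.exp (t • C)), aux_exp_map (t • C)]
    congr 2
    ext i j
    simp [Matrix.map_apply]
  rw [heq]
  exact hbound t ht
end

section
/- Let A be an n×n real matrix with n ≥ 2 such that A_{ij} ≥ 0 for all i ≠ j, every column of A sums to zero, and the directed graph on {1,…,n} with an edge from j to i whenever i ≠ j and A_{ij} > 0 is strongly connected. Let W' be the 1×(n−1) all-ones row vector, so that W = (W' I₁) = (1,1,…,1) satisfies W·A = 0. Write A = [[A₁₁, A₁₂],[A₂₁, A₂₂]] with A₁₁ of size (n−1)×(n−1). Then every complex eigenvalue of C = A₁₁ − A₁₂W' has strictly negative real part. -/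
open Matrix Complex Finset

lemma ker_aux {n : Type*} [Fintype n] [DecidableEq n]
    (A : Matrix n n ℝ)
    (hoff : ∀ i j, i ≠ j → 0 ≤ A i j)
    (hcol : ∀ j, ∑ i, A i j = 0)
    (hconn : ∀ i j, Relation.ReflTransGen (fun p q => p ≠ q ∧ 0 < A q p) j i)
    (y : n → ℝ) (hy : A.mulVec y = 0) (hsum : ∑ i, y i = 0) : y = 0 := by
  classical
  by_contra hne
  have hpos : ∃ p, 0 < y p := by
    by_contra h
    push_neg at h
    have h0 := (Finset.sum_eq_zero_iff_of_nonpos (fun i _ => h i)).mp hsum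
    exact hne (funext fun i => h0 i (Finset.mem_univ i))
  have hneg : ∃ q, y q < 0 := by
    by_contra h
    push_neg at h
    have h0 := (Finset.sum_eq_zero_iff_of_nonneg (fun i _ => h i)).mp hsum
    exact hne (funext fun i => h0 i (Finset.mem_univ i))
  obtain ⟨p, hp⟩ := hpos
  obtain ⟨q, hq⟩ := hneg
  set P : Finset n := Finset.univ.filter (fun i => 0 < y i) with hP
  have hS : ∑ j, (∑ i ∈ P, A i j) * y j = 0 := by
    have e1 : ∑ j, (∑ i ∈ P, A i j) * y j = ∑ i ∈ P, (A.mulVec y) i := by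
      simp only [Matrix.mulVec, dotProduct, Finset.sum_mul]
      rw [Finset.sum_comm]
    rw [e1, hy]; simp
  -- column splits
  have hcolsplit : ∀ j, (∑ i ∈ P, A i j) + (∑ i ∈ Finset.univ.filter (fun i => ¬ 0 < y i), A i j) = 0 := by
    intro j
    rw [Finset.sum_filter_add_sum_filter_not Finset.univ (fun i => 0 < y i) (fun i => A i j)]
    exact hcol j
  have hnonposP : ∀ j ∈ P, (∑ i ∈ P, A i j) * y j ≤ 0 := by
    intro j hj
    have hyj : 0 < y j := (Finset.mem_filter.mp hj).2
    have h1 : (0:ℝ) ≤ ∑ i ∈ Finset.univ.filter (fun i => ¬ 0 < y i), A i j := by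
      apply Finset.sum_nonneg
      intro i hi
      have hyi : ¬ 0 < y i := (Finset.mem_filter.mp hi).2
      exact hoff i j (fun h => hyi (h ▸ hyj))
    have h2 : (∑ i ∈ P, A i j) ≤ 0 := by linarith [hcolsplit j]
    exact mul_nonpos_of_nonpos_of_nonneg h2 hyj.le
  have hnonposC : ∀ j ∈ Finset.univ.filter (fun i => ¬ 0 < y i), (∑ i ∈ P, A i j) * y j ≤ 0 := by
    intro j hj
    have hyj : ¬ 0 < y j := (Finset.mem_filter.mp hj).2
    have h1 : (0:ℝ) ≤ ∑ i ∈ P, A i j := by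
      apply Finset.sum_nonneg
      intro i hi
      have hyi : 0 < y i := (Finset.mem_filter.mp hi).2
      exact hoff i j (fun h => hyj (h ▸ hyi))
    exact mul_nonpos_of_nonneg_of_nonpos h1 (not_lt.mp hyj)
  have hsplitS := Finset.sum_filter_add_sum_filter_not Finset.univ (fun j => 0 < y j)
      (fun j => (∑ i ∈ P, A i j) * y j)
  rw [hS] at hsplitS
  have hS1 : ∑ j ∈ P, (∑ i ∈ P, A i j) * y j = 0 := by
    have h1 := Finset.sum_nonpos hnonposP
    have h2 := Finset.sum_nonpos hnonposC
    have := hsplitS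
    rw [hP]; linarith
  have hkey : ∀ j, 0 < y j → ∀ i, ¬ 0 < y i → A i j = 0 := by
    intro j hyj i hyi
    have hjP : j ∈ P := Finset.mem_filter.mpr ⟨Finset.mem_univ j, hyj⟩
    have hterm := (Finset.sum_eq_zero_iff_of_nonpos hnonposP).mp hS1 j hjP
    have hsum0 : (∑ i ∈ P, A i j) = 0 := by
      rcases mul_eq_zero.mp hterm with h | h
      · exact h
      · exact absurd h (ne_of_gt hyj)
    have hCsum : (∑ i ∈ Finset.univ.filter (fun i => ¬ 0 < y i), A i j) = 0 := by
      linarith [hcolsplit j]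
    have hnn : ∀ i ∈ Finset.univ.filter (fun i => ¬ 0 < y i), 0 ≤ A i j := by
      intro i hi
      have hyi : ¬ 0 < y i := (Finset.mem_filter.mp hi).2
      exact hoff i j (fun h => hyi (h ▸ hyj))
    exact (Finset.sum_eq_zero_iff_of_nonneg hnn).mp hCsum i
      (Finset.mem_filter.mpr ⟨Finset.mem_univ i, hyi⟩)
  have hreach : ∀ i, Relation.ReflTransGen (fun p q => p ≠ q ∧ 0 < A q p) p i → 0 < y i := by
    intro i h
    induction h with
    | refl => exact hp
    | tail _ hbc ih =>
        by_contra hc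
        exact absurd (hkey _ ih _ hc) (ne_of_gt hbc.2)
  exact absurd (hreach q (hconn q p)) (not_lt.mpr hq.le)

lemma gersh_aux {n : Type*} [Fintype n] [DecidableEq n]
    (A : Matrix n n ℝ)
    (hoff : ∀ i j, i ≠ j → 0 ≤ A i j)
    (hcol : ∀ j, ∑ i, A i j = 0)
    (μ : ℂ) (hμ : μ ≠ 0)
    (z : n → ℂ) (hz : z ≠ 0)
    (heig : ∀ j, ∑ i, (A i j : ℂ) * z i = μ * z j) : μ.re < 0 := by
  classical
  obtain ⟨k, hk⟩ := Function.ne_iff.mp hz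
  have hne : (Finset.univ : Finset n).Nonempty := ⟨k, Finset.mem_univ k⟩
  obtain ⟨j, -, hjmax⟩ := Finset.exists_max_image Finset.univ (fun i => ‖z i‖) hne
  have hzj : 0 < ‖z j‖ := by
    have := hjmax k (Finset.mem_univ k)
    have hk' : 0 < ‖z k‖ := by simpa using hk
    linarith
  set a := A j j with ha
  have hsplit : (μ - (a:ℂ)) * z j = ∑ i ∈ Finset.univ.erase j, (A i j : ℂ) * z i := by
    have h1 := heig j
    rw [← Finset.add_sum_erase _ _ (Finset.mem_univ j)] at h1
    have ha' : ((a:ℝ):ℂ) = ((A j j : ℝ):ℂ) := by rw [ha]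
    rw [ha']
    have e : (μ - ((A j j : ℝ):ℂ)) * z j = μ * z j - ((A j j : ℝ):ℂ) * z j := by ring
    rw [e, ← h1]
    ring
  have hasum : ∑ i ∈ Finset.univ.erase j, A i j = -a := by
    have := hcol j
    rw [← Finset.add_sum_erase _ _ (Finset.mem_univ j)] at this
    linarith
  have habs : ‖μ - (a:ℂ)‖ * ‖z j‖ ≤ (-a) * ‖z j‖ := by
    rw [← norm_mul, hsplit]
    calc ‖∑ i ∈ Finset.univ.erase j, (A i j : ℂ) * z i‖
        ≤ ∑ i ∈ Finset.univ.erase j, ‖(A i j : ℂ) * z i‖ := by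
          exact norm_sum_le _ _
      _ ≤ ∑ i ∈ Finset.univ.erase j, A i j * ‖z j‖ := by
          apply Finset.sum_le_sum
          intro i hi
          have hij : i ≠ j := Finset.ne_of_mem_erase hi
          have h0 : 0 ≤ A i j := hoff i j hij
          rw [norm_mul, Complex.norm_real, Real.norm_of_nonneg h0]
          exact mul_le_mul_of_nonneg_left (hjmax i (Finset.mem_univ i)) h0
      _ = (-a) * ‖z j‖ := by rw [← Finset.sum_mul, hasum]
  have hle : ‖μ - (a:ℂ)‖ ≤ -a := le_of_mul_le_mul_right habs hzj
  have hre : μ.re - a ≤ ‖μ - (a:ℂ)‖ := by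
    have := Complex.re_le_norm (μ - (a:ℂ))
    simpa using this
  have hre0 : μ.re ≤ 0 := by linarith
  rcases lt_or_eq_of_le hre0 with h | h
  · exact h
  · exfalso
    apply hμ
    have him : μ.im = 0 := by
      have hsq : ‖μ - (a:ℂ)‖ ^ 2 ≤ a ^ 2 := by
        have hna : 0 ≤ -a := le_trans (norm_nonneg _) hle
        nlinarith [norm_nonneg (μ - (a:ℂ))]
      rw [Complex.sq_norm, Complex.normSq_apply] at hsq
      simp only [Complex.sub_re, Complex.ofReal_re, Complex.sub_im, Complex.ofReal_im, h] at hsq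
      nlinarith [sq_nonneg μ.im]
    exact Complex.ext (by simp [← h]) (by simp [him])

lemma eig_neg {n : Type*} [Fintype n] [DecidableEq n]
    (A : Matrix n n ℝ)
    (hoff : ∀ i j, i ≠ j → 0 ≤ A i j)
    (hcol : ∀ j, ∑ i, A i j = 0)
    (hconn : ∀ i j, Relation.ReflTransGen (fun p q => p ≠ q ∧ 0 < A q p) j i)
    (μ : ℂ) (x : n → ℂ) (hx : x ≠ 0)
    (heig : (A.map Complex.ofReal).mulVec x = μ • x)
    (hsum : ∑ j, x j = 0) : μ.re < 0 := by
  classical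
  rcases eq_or_ne μ 0 with hμ | hμ
  · exfalso
    subst hμ
    simp only [zero_smul] at heig
    have hval : ∀ i, ∑ j, (A i j : ℂ) * x j = 0 := by
      intro i
      have := congrFun heig i
      simpa [Matrix.mulVec, dotProduct, Matrix.map_apply] using this
    have hre : (fun j => (x j).re) = 0 := by
      apply ker_aux A hoff hcol hconn
      · funext i
        have := congrArg Complex.re (hval i)
        simpa [Complex.re_sum, Complex.re_ofReal_mul, Matrix.mulVec, dotProduct] using this
      · have := congrArg Complex.re hsum
        simpa [Complex.re_sum] using this
    have him : (fun j => (x j).im) = 0 := by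
      apply ker_aux A hoff hcol hconn
      · funext i
        have := congrArg Complex.im (hval i)
        simpa [Complex.im_sum, Complex.im_ofReal_mul, Matrix.mulVec, dotProduct] using this
      · have := congrArg Complex.im hsum
        simpa [Complex.im_sum] using this
    apply hx
    funext j
    exact Complex.ext (congrFun hre j) (congrFun him j)
  · -- get left eigenvector
    have hdet : ((A.map Complex.ofReal) - μ • 1).det = 0 := by
      rw [← Matrix.exists_mulVec_eq_zero_iff]
      refine ⟨x, hx, ?_⟩
      rw [Matrix.sub_mulVec, Matrix.smul_mulVec, Matrix.one_mulVec, heig, sub_self]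
    have hdetT : (((A.map Complex.ofReal) - μ • 1)ᵀ).det = 0 := by
      rw [Matrix.det_transpose]; exact hdet
    obtain ⟨z, hz, hzv⟩ := (Matrix.exists_mulVec_eq_zero_iff).mpr hdetT
    apply gersh_aux A hoff hcol μ hμ z hz
    intro j
    rw [Matrix.transpose_sub, Matrix.transpose_smul, Matrix.transpose_one] at hzv
    have h1 := congrFun hzv j
    simp only [Matrix.sub_mulVec, Matrix.smul_mulVec, Matrix.one_mulVec, Pi.sub_apply,
      Pi.smul_apply, smul_eq_mul, Pi.zero_apply, sub_eq_zero] at h1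
    rw [← h1]
    simp [Matrix.mulVec, dotProduct, Matrix.transpose_apply, Matrix.map_apply, mul_comm]

/-- Let `A` be an `n × n` real Laplacian matrix of a strongly connected network with
`n = m + 1 ≥ 2` (indices split as `Fin m ⊕ Fin 1`): off-diagonal entries are nonnegative,
columns sum to zero, and the directed graph with an edge from `j` to `i` whenever `i ≠ j`
and `A i j > 0` is strongly connected.  Let `W'` be the `1 × m` all-ones row vector, so
that `W = (W'  I₁) = (1, …, 1)` satisfies `W * A = 0`.  Then every complex eigenvalue of
`C = A₁₁ - A₁₂ * W'` has strictly negative real part. -/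
theorem reduced_laplacian_eigenvalues_negative
    (m : ℕ) (hm : 0 < m)
    (A : Matrix (Fin m ⊕ Fin 1) (Fin m ⊕ Fin 1) ℝ)
    (hoff : ∀ i j, i ≠ j → 0 ≤ A i j)
    (hcol : ∀ j, ∑ i, A i j = 0)
    (hconn : ∀ i j : Fin m ⊕ Fin 1,
      Relation.ReflTransGen (fun p q : Fin m ⊕ Fin 1 => p ≠ q ∧ 0 < A q p) j i)
    (W' : Matrix (Fin 1) (Fin m) ℝ) (hW' : ∀ i j, W' i j = 1) :
    Matrix.fromCols W' (1 : Matrix (Fin 1) (Fin 1) ℝ) * A = 0 ∧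
    ∀ μ : ℂ,
      ((A.toBlocks₁₁ - A.toBlocks₁₂ * W').map Complex.ofReal - μ • 1).det = 0 → μ.re < 0 := by
  classical
  constructor
  · ext i j
    simp only [Matrix.mul_apply, Matrix.zero_apply]
    have he : ∀ k, Matrix.fromCols W' (1 : Matrix (Fin 1) (Fin 1) ℝ) i k = 1 := by
      intro k
      cases k with
      | inl a => simp [Matrix.fromCols, hW']
      | inr b => simp [Matrix.fromCols, Matrix.one_apply, Subsingleton.elim i b]
    calc ∑ k, Matrix.fromCols W' (1 : Matrix (Fin 1) (Fin 1) ℝ) i k * A k j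
        = ∑ k, A k j := by
          apply Finset.sum_congr rfl; intro k _; rw [he k, one_mul]
      _ = 0 := hcol j
  · intro μ hdet
    obtain ⟨v, hv, hveq⟩ := (Matrix.exists_mulVec_eq_zero_iff).mpr hdet
    have hveq' : ((A.toBlocks₁₁ - A.toBlocks₁₂ * W').map Complex.ofReal).mulVec v = μ • v := by
      rw [Matrix.sub_mulVec, Matrix.smul_mulVec, Matrix.one_mulVec, sub_eq_zero] at hveq
      exact hveq
    set x : Fin m ⊕ Fin 1 → ℂ := Sum.elim v (fun _ => -∑ k, v k) with hxdef
    have hx0 : x ≠ 0 := by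
      obtain ⟨k, hk⟩ := Function.ne_iff.mp hv
      intro h
      apply hk
      have := congrFun h (Sum.inl k)
      simpa [hxdef] using this
    have hxsum : ∑ j, x j = 0 := by
      rw [Fintype.sum_sum_type]
      simp [hxdef]
    -- entrywise description of the reduced matrix
    have hEntry : ∀ (i k : Fin m), (A.toBlocks₁₁ - A.toBlocks₁₂ * W') i k
        = A (Sum.inl i) (Sum.inl k) - A (Sum.inl i) (Sum.inr 0) := by
      intro i k
      simp [Matrix.sub_apply, Matrix.mul_apply, Matrix.toBlocks₁₁, Matrix.toBlocks₁₂,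
        Fin.sum_univ_one, hW']
    have hco : ∀ i : Fin m, (∑ k, (A (Sum.inl i) (Sum.inl k) : ℂ) * v k)
        - (A (Sum.inl i) (Sum.inr 0) : ℂ) * ∑ k, v k = μ * v i := by
      intro i
      have h1 := congrFun hveq' i
      simp only [Matrix.mulVec, dotProduct, Matrix.map_apply, Pi.smul_apply,
        smul_eq_mul] at h1
      rw [← h1]
      rw [Finset.mul_sum, ← Finset.sum_sub_distrib]
      apply Finset.sum_congr rfl
      intro k _
      rw [hEntry i k]
      push_cast
      ring
    -- column sums over ℂ
    have hcolC : ∀ jj, (A (Sum.inr 0) jj : ℂ) = -∑ i : Fin m, (A (Sum.inl i) jj : ℂ) := by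
      intro jj
      have h1 := hcol jj
      rw [Fintype.sum_sum_type, Fin.sum_univ_one] at h1
      have : A (Sum.inr 0) jj = -∑ i : Fin m, A (Sum.inl i) jj := by linarith
      rw [this]
      push_cast
      ring
    have heig : (A.map Complex.ofReal).mulVec x = μ • x := by
      funext j
      cases j with
      | inl i =>
          have hL : ((A.map Complex.ofReal).mulVec x) (Sum.inl i)
              = (∑ k, (A (Sum.inl i) (Sum.inl k) : ℂ) * v k)
                + (A (Sum.inl i) (Sum.inr 0) : ℂ) * (-∑ k, v k) := by
            simp [Matrix.mulVec, dotProduct, Fintype.sum_sum_type, Fin.sum_univ_one,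
              hxdef, Matrix.map_apply]
          rw [hL]
          have hR : (μ • x) (Sum.inl i) = μ * v i := by simp [hxdef]
          rw [hR, ← hco i]
          ring
      | inr b =>
          have hb : b = (0 : Fin 1) := Subsingleton.elim _ _
          subst hb
          have hL : ((A.map Complex.ofReal).mulVec x) (Sum.inr 0)
              = (∑ k, (A (Sum.inr 0) (Sum.inl k) : ℂ) * v k)
                + (A (Sum.inr 0) (Sum.inr 0) : ℂ) * (-∑ k, v k) := by
            simp [Matrix.mulVec, dotProduct, Fintype.sum_sum_type, Fin.sum_univ_one,
              hxdef, Matrix.map_apply]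
          have hR : (μ • x) (Sum.inr 0) = μ * (-∑ k, v k) := by simp [hxdef]
          rw [hL, hR]
          have hsum2 : (∑ i : Fin m, ∑ k, (A (Sum.inl i) (Sum.inl k) : ℂ) * v k)
              - (∑ i : Fin m, (A (Sum.inl i) (Sum.inr 0) : ℂ)) * ∑ k, v k
              = μ * ∑ k, v k := by
            rw [Finset.sum_mul, ← Finset.sum_sub_distrib]
            rw [Finset.sum_congr rfl (fun i _ => hco i), ← Finset.mul_sum]
          have e1 : (∑ k, (A (Sum.inr 0) (Sum.inl k) : ℂ) * v k)
              = -∑ i : Fin m, ∑ k, (A (Sum.inl i) (Sum.inl k) : ℂ) * v k := by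
            rw [Finset.sum_comm, ← Finset.sum_neg_distrib]
            apply Finset.sum_congr rfl
            intro k _
            rw [hcolC (Sum.inl k), ← Finset.sum_neg_distrib, Finset.sum_mul,
              ← Finset.sum_neg_distrib]
            apply Finset.sum_congr rfl
            intro i _
            ring
          rw [e1, hcolC (Sum.inr 0)]
          linear_combination -hsum2
    exact eig_neg A hoff hcol hconn μ x hx0 heig hxsum
end

section
/- The Expectation-step reaction systems converge exponentially fast when the parameters are held fixed at a positive point. Precisely: suppose θ ∈ ℝ^{H×H}, ψ ∈ ℝ^{H×V}, and π : H → ℝ are fixed with all entries strictly positive, and fix positive rate constants k^α_{lh}, k^β_{lh}, k^γ_{lh}, k^ξ_{lgh} (one per petal). Let α, β : [0,∞) → ℝ^{{1..L}×H}, γ : [0,∞) → ℝ^{{1..L−1}×H}, ξ : [0,∞) → ℝ^{{1..L−1}×H×H} be differentiable and satisfy the mass-action ODEs: for h ≠ h*: α'_{1h}(t) = k^α_{1h}(α_{1,h*}(t)·π_h ψ_{h,v_1} − α_{1h}(t)·π_{h*}ψ_{h*,v_1}) and α'_{1,h*}(t) = −Σ_{h≠h*} α'_{1h}(t); for 2 ≤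 l ≤ L and h ≠ h*: α'_{lh}(t) = k^α_{lh}(α_{l,h*}(t)·Σ_{g∈H} α_{l−1,g}(t)θ_{gh}ψ_{h,v_l} − α_{lh}(t)·Σ_{g∈H} α_{l−1,g}(t)θ_{g,h*}ψ_{h*,v_l}) and α'_{l,h*}(t) = −Σ_{h≠h*} α'_{lh}(t); β_{Lh}(t) = β_{Lh}(0) for all h and t; for 1 ≤ l ≤ L−1 and h ≠ h*: β'_{lh}(t) = k^β_{lh}(β_{l,h*}(t)·Σ_{g∈H} θ_{hg}ψ_{g,v_{l+1}}β_{l+1,g}(t) − β_{lh}(t)·Σ_{g∈H} θ_{h*,g}ψ_{g,v_{l+1}}β_{l+1,g}(t)) and β'_{l,h*}(t) = −Σ_{h≠h*} β'_{lh}(t); for 1 ≤ l ≤ L−1 and h ≠ h*: γ'_{lh}(t) = k^γ_{lh}(γ_{l,h*}(t)·α_{lh}(t)β_{lh}(t) − γ_{lh}(t)·α_{l,h*}(t)β_{l,h*}(t)) and γ'_{l,h*}(t) = −Σ_{h≠h*} γ'_{lh}(t); for 1 ≤ l ≤ L−1 and (g,h) ≠ (h*,h*): ξ'_{lgh}(t)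 = k^ξ_{lgh}(ξ_{l,h*,h*}(t)·α_{lg}(t)θ_{gh}ψ_{h,v_{l+1}}β_{l+1,h}(t) − ξ_{lgh}(t)·α_{l,h*}(t)θ_{h*,h*}ψ_{h*,v_{l+1}}β_{l+1,h*}(t)) and ξ'_{l,h*,h*}(t) = −Σ_{(g,h)≠(h*,h*)} ξ'_{lgh}(t). Assume all initial values are nonnegative, β_{Lh}(0) > 0 for all h, Σ_{h∈H} α_{lh}(0) > 0 for each 1 ≤ l ≤ L, Σ_{h∈H} β_{lh}(0) > 0 for each 1 ≤ l ≤ L−1, Σ_{h∈H} γ_{lh}(0) > 0 and Σ_{g,h∈H} ξ_{lgh}(0) > 0 for each 1 ≤ l ≤ L−1. Then there exist limits α∞, β∞, γ∞, ξ∞ and constants K > 0, λ > 0 such that ‖α(t) − α∞‖ + ‖β(t) − β∞‖ + ‖γ(t) − γ∞‖ + ‖ξ(t) − ξ∞‖ ≤ K e^{−λ t} for all t ≥ 0. -/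
open Finset Set

lemma BW.mono {f f' : ℝ → ℝ} (hf : ∀ t, 0 ≤ t → HasDerivAt f (f' t) t)
    (h0 : ∀ t, 0 ≤ t → 0 ≤ f' t) : ∀ s t : ℝ, 0 ≤ s → s ≤ t → f s ≤ f t := by
  intro s t hs hst
  have hmono : MonotoneOn f (Set.Ici (0:ℝ)) := by
    apply monotoneOn_of_deriv_nonneg (convex_Ici 0)
    · exact fun u hu => (hf u hu).continuousAt.continuousWithinAt
    · intro u hu
      rw [interior_Ici] at hu
      exact (hf u hu.le).differentiableAt.differentiableWithinAt
    · intro u hu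
      rw [interior_Ici] at hu
      rw [(hf u hu.le).deriv]
      exact h0 u hu.le
  exact hmono hs (hs.trans hst) hst

lemma BW.const {f f' : ℝ → ℝ} (hf : ∀ t, 0 ≤ t → HasDerivAt f (f' t) t)
    (h0 : ∀ t, 0 ≤ t → f' t = 0) : ∀ t, 0 ≤ t → f t = f 0 := by
  intro t ht
  have h1 := BW.mono hf (fun t ht => (h0 t ht).ge) 0 t le_rfl ht
  have h2 := BW.mono (f := fun s => -f s) (f' := fun s => -f' s)
    (fun t ht => (hf t ht).neg) (fun t ht => by simp [h0 t ht]) 0 t le_rfl ht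
  simp only [neg_le_neg_iff] at h2
  linarith

/-- Linear Grönwall comparison. -/
lemma BW.gronwall {f f' : ℝ → ℝ} {lam C mu : ℝ} (hmu : 0 < mu) (hml : mu < lam)
    (hC : 0 ≤ C) (hf0 : 0 ≤ f 0)
    (hf : ∀ t, 0 ≤ t → HasDerivAt f (f' t) t)
    (hb : ∀ t, 0 ≤ t → f' t ≤ -lam * f t + C * Real.exp (-mu * t)) :
    ∀ t, 0 ≤ t → f t ≤ (f 0 + C / (lam - mu)) * Real.exp (-mu * t) := by
  have hlm : lam - mu ≠ 0 := ne_of_gt (by linarith)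
  set D := C / (lam - mu) with hD
  have hDpos : 0 ≤ D := div_nonneg hC (by linarith)
  have hDC : D * (lam - mu) = C := by rw [hD, div_mul_cancel₀ _ hlm]
  set G : ℝ → ℝ := fun t => Real.exp (lam * t) * f t - D * Real.exp ((lam - mu) * t) with hG
  have hG' : ∀ t, 0 ≤ t → HasDerivAt G
      (Real.exp (lam * t) * (lam * f t + f' t) - D * ((lam - mu) * Real.exp ((lam - mu) * t))) t := by
    intro t ht
    have h1 := ((hasDerivAt_id t).const_mul lam).exp
    have h2 := ((hasDerivAt_id t).const_mul (lam - mu)).exp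
    have h3 := (h1.fun_mul (hf t ht)).fun_sub (h2.const_mul D)
    refine h3.congr_deriv ?_
    simp only [id_eq]
    ring
  have hle : ∀ t, 0 ≤ t → G t ≤ G 0 := by
    intro t ht
    have hm := BW.mono (f := fun s => -G s)
      (f' := fun s => -(Real.exp (lam * s) * (lam * f s + f' s)
        - D * ((lam - mu) * Real.exp ((lam - mu) * s))))
      (fun u hu => (hG' u hu).neg) ?_ 0 t le_rfl ht
    · simp only [neg_le_neg_iff] at hm; exact hm
    · intro s hs
      have hbs := hb s hs
      have hee : Real.exp (lam * s) * Real.exp (-mu * s) = Real.exp ((lam - mu) * s) := by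
        rw [← Real.exp_add]; congr 1; ring
      have hkey : Real.exp (lam * s) * (lam * f s + f' s)
          ≤ D * ((lam - mu) * Real.exp ((lam - mu) * s)) := by
        calc Real.exp (lam * s) * (lam * f s + f' s)
            ≤ Real.exp (lam * s) * (C * Real.exp (-mu * s)) :=
              mul_le_mul_of_nonneg_left (by linarith) (Real.exp_pos _).le
          _ = C * Real.exp ((lam - mu) * s) := by rw [← hee]; ring
          _ = D * ((lam - mu) * Real.exp ((lam - mu) * s)) := by rw [← hDC]; ring
      simp only [neg_sub]
      linarith
  intro t ht
  have h1 := hle t ht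
  have hG0 : G 0 = f 0 - D := by simp [hG]
  have hGt : G t = Real.exp (lam * t) * f t - D * Real.exp ((lam - mu) * t) := rfl
  have hexp : Real.exp (lam * t) * f t ≤ f 0 - D + D * Real.exp ((lam - mu) * t) := by
    rw [hGt, hG0] at h1; linarith
  have e1 : Real.exp (-lam * t) * Real.exp (lam * t) = 1 := by
    rw [← Real.exp_add]; norm_num
  have e2 : Real.exp (-mu * t) = Real.exp (-lam * t) * Real.exp ((lam - mu) * t) := by
    rw [← Real.exp_add]; congr 1; ring
  have h4 : f t ≤ (f 0 - D) * Real.exp (-lam * t) + D * Real.exp (-mu * t) := by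
    have h3 := mul_le_mul_of_nonneg_left hexp (Real.exp_nonneg (-lam * t))
    calc f t = Real.exp (-lam * t) * (Real.exp (lam * t) * f t) := by
          rw [← mul_assoc, e1, one_mul]
      _ ≤ Real.exp (-lam * t) * (f 0 - D + D * Real.exp ((lam - mu) * t)) := h3
      _ = (f 0 - D) * Real.exp (-lam * t) + D * Real.exp (-mu * t) := by rw [e2]; ring
  have hmono : Real.exp (-lam * t) ≤ Real.exp (-mu * t) :=
    Real.exp_le_exp.mpr (by nlinarith)
  calc f t ≤ (f 0 - D) * Real.exp (-lam * t) + D * Real.exp (-mu * t) := h4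
    _ ≤ (f 0 + D) * Real.exp (-mu * t) := by
        rcases le_or_gt (f 0 - D) 0 with h | h
        · nlinarith [Real.exp_pos (-lam * t), Real.exp_pos (-mu * t)]
        · nlinarith [Real.exp_pos (-mu * t)]

set_option maxHeartbeats 2000000 in
lemma BW.petal {ι : Type*} [Fintype ι] [DecidableEq ι] [Nonempty ι] (star : ι)
    (k : ι → ℝ) (hk : ∀ i, 0 < k i)
    (a : ℝ → ι → ℝ) (ainf : ι → ℝ) (hainf : ∀ i, 0 < ainf i)
    (hann : ∀ t, 0 ≤ t → ∀ i, 0 ≤ a t i)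
    (Ca mu : ℝ) (hCa : 0 < Ca) (hmu : 0 < mu)
    (ha : ∀ t, 0 ≤ t → ∀ i, |a t i - ainf i| ≤ Ca * Real.exp (-mu * t))
    (x : ℝ → ι → ℝ)
    (hx : ∀ i, i ≠ star → ∀ t, 0 ≤ t → HasDerivAt (fun s => x s i)
        (k i * (x t star * a t i - x t i * a t star)) t)
    (hxs : ∀ t, 0 ≤ t → HasDerivAt (fun s => x s star)
        (-∑ i ∈ Finset.univ.erase star, k i * (x t star * a t i - x t i * a t star)) t)
    (hx0 : ∀ i, 0 ≤ x 0 i) (hS : 0 < ∑ i, x 0 i) :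
    ∃ xinf : ι → ℝ, (∀ i, 0 < xinf i) ∧ (∀ t, 0 ≤ t → ∀ i, 0 ≤ x t i) ∧
      ∃ K lam : ℝ, 0 < K ∧ 0 < lam ∧
        ∀ t, 0 ≤ t → ∀ i, |x t i - xinf i| ≤ K * Real.exp (-lam * t) := by
  classical
  set S : ℝ := ∑ i, x 0 i with hSdef
  -- derivative of each coordinate (including star), as a single statement
  have hx' : ∀ i, ∀ t, 0 ≤ t → HasDerivAt (fun s => x s i)
      (if i = star then -∑ j ∈ Finset.univ.erase star, k j * (x t star * a t j - x t j * a t star)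
       else k i * (x t star * a t i - x t i * a t star)) t := by
    intro i t ht
    by_cases hi : i = star
    · subst hi; simpa using hxs t ht
    · simpa [hi] using hx i hi t ht
  -- continuity
  have hcont : ∀ i, ∀ t : ℝ, 0 ≤ t → ContinuousAt (fun s => x s i) t :=
    fun i t ht => (hx' i t ht).continuousAt
  -- mass conservation
  have hsum : ∀ t, 0 ≤ t → ∑ i, x t i = S := by
    have hg : ∀ t, 0 ≤ t → HasDerivAt (fun s => ∑ i, x s i)
        ((if star = star then -∑ j ∈ Finset.univ.erase star, k j * (x t star * a t j - x t j * a t star)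
         else k star * (x t star * a t star - x t star * a t star)) +
          ∑ i ∈ Finset.univ.erase star,
            (if i = star then -∑ j ∈ Finset.univ.erase star, k j * (x t star * a t j - x t j * a t star)
             else k i * (x t star * a t i - x t i * a t star))) t := by
      intro t ht
      have h1 : HasDerivAt (fun s => x s star + ∑ i ∈ Finset.univ.erase star, x s i) _ t :=
        (hx' star t ht).add (HasDerivAt.fun_sum (fun i hi => hx' i t ht))
      have heq : (fun s => ∑ i, x s i) = fun s => x s star + ∑ i ∈ Finset.univ.erase star, x s i := by
        funext s
        rw [Finset.add_sum_erase _ _ (Finset.mem_univ star)]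
      rw [heq]
      exact h1
    have hzero : ∀ t, 0 ≤ t → ((if star = star then -∑ j ∈ Finset.univ.erase star, k j * (x t star * a t j - x t j * a t star)
         else k star * (x t star * a t star - x t star * a t star)) +
          ∑ i ∈ Finset.univ.erase star,
            (if i = star then -∑ j ∈ Finset.univ.erase star, k j * (x t star * a t j - x t j * a t star)
             else k i * (x t star * a t i - x t i * a t star))) = 0 := by
      intro t ht
      rw [if_pos rfl]
      rw [Finset.sum_congr rfl (fun i hi => if_neg (Finset.ne_of_mem_erase hi))]
      ring
    intro t ht
    exact BW.const hg hzero t ht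
  -- global bound on a
  set A : ℝ := (∑ i, ainf i) + Ca with hA
  have hApos : 0 < A := by
    have := Finset.sum_pos (fun i (_ : i ∈ Finset.univ) => hainf i) Finset.univ_nonempty
    simp only [hA]; linarith
  have haA : ∀ t, 0 ≤ t → ∀ i, a t i ≤ A := by
    intro t ht i
    have h1 := ha t ht i
    have h2 : a t i - ainf i ≤ Ca * Real.exp (-mu * t) := (abs_le.mp h1).2
    have h3 : Real.exp (-mu * t) ≤ 1 := Real.exp_le_one_iff.mpr (by nlinarith)
    have h4 : ainf i ≤ ∑ j, ainf j :=
      Finset.single_le_sum (fun j _ => (hainf j).le) (Finset.mem_univ i)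
    nlinarith
  -- nonnegativity
  have hnn : ∀ t, 0 ≤ t → ∀ i, 0 ≤ x t i := by
    have hκpos : 0 < ∑ i, k i := Finset.sum_pos (fun i _ => hk i) Finset.univ_nonempty
    set κ : ℝ := ∑ i, k i with hκ
    have hkκ : ∀ i, k i ≤ κ := fun i => Finset.single_le_sum (fun j _ => (hk j).le) (Finset.mem_univ i)
    have hn1 : (1:ℝ) ≤ (Fintype.card ι : ℝ) := by exact_mod_cast Fintype.card_pos
    set C : ℝ := κ * A * (Fintype.card ι : ℝ) + 1 with hCdef
    have hCκA : κ * A + 1 ≤ C := by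
      rw [hCdef]
      nlinarith [mul_pos hκpos hApos]
    have key : ∀ ε : ℝ, 0 < ε → ∀ t, 0 ≤ t → ∀ i, 0 < x t i + ε * Real.exp (C * t) := by
      intro ε hε
      by_contra hcon
      push_neg at hcon
      obtain ⟨t1, ht1, i1, hi1⟩ := hcon
      set E : Set ℝ := {t | 0 ≤ t ∧ ∃ i, x t i + ε * Real.exp (C * t) ≤ 0} with hE
      have hEne : E.Nonempty := ⟨t1, ht1, i1, hi1⟩
      have hEbdd : BddBelow E := ⟨0, fun t ht => ht.1⟩
      set t₀ : ℝ := sInf E with ht₀def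
      have ht₀0 : 0 ≤ t₀ := le_csInf hEne (fun t ht => ht.1)
      have ht₀cl : t₀ ∈ closure E := csInf_mem_closure hEne hEbdd
      have hcoord : ∀ j, ContinuousAt (fun s => x s j + ε * Real.exp (C * s)) t₀ := by
        intro j
        have h2 : Continuous fun s : ℝ => ε * Real.exp (C * s) := by continuity
        exact (hcont j t₀ ht₀0).add h2.continuousAt
      set g : ℝ → ℝ := fun t =>
        Finset.univ.inf' Finset.univ_nonempty (fun i => x t i + ε * Real.exp (C * t)) with hgdef
      have hgc : ContinuousAt g t₀ :=
        ContinuousAt.finset_inf'_apply Finset.univ_nonempty (fun i _ => hcoord i)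
      have hgE : ∀ t ∈ E, g t ≤ 0 := by
        rintro t ⟨ht0, i, hi⟩
        exact le_trans (Finset.inf'_le _ (Finset.mem_univ i)) hi
      have hg0 : g t₀ ≤ 0 := by
        have h1 : g t₀ ∈ closure (g '' E) := hgc.continuousWithinAt.mem_closure_image ht₀cl
        have h2 : g '' E ⊆ Set.Iic 0 := by rintro y ⟨t, ht, rfl⟩; exact hgE t ht
        exact closure_minimal h2 isClosed_Iic h1
      obtain ⟨i, -, hieq⟩ := Finset.exists_mem_eq_inf' Finset.univ_nonempty
        (fun i => x t₀ i + ε * Real.exp (C * t₀))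
      have hgt₀ : g t₀ = x t₀ i + ε * Real.exp (C * t₀) := hieq
      have hit₀ : x t₀ i + ε * Real.exp (C * t₀) ≤ 0 := by linarith [hg0, hgt₀ ▸ hg0]
      have ht₀pos : 0 < t₀ := by
        rcases lt_or_eq_of_le ht₀0 with h | h
        · exact h
        · exfalso
          rw [← h] at hit₀
          simp only [mul_zero, Real.exp_zero, mul_one] at hit₀
          linarith [hx0 i]
      have hbefore : ∀ s, 0 ≤ s → s < t₀ → ∀ j, 0 < x s j + ε * Real.exp (C * s) := by
        intro s hs hst j
        by_contra hle
        push_neg at hle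
        exact absurd (csInf_le hEbdd ⟨hs, j, hle⟩) (not_le.mpr hst)
      have hleft : ∀ j, 0 ≤ x t₀ j + ε * Real.exp (C * t₀) := by
        intro j
        have htend := (hcoord j).tendsto.mono_left (nhdsWithin_le_nhds (s := Set.Iio t₀))
        apply ge_of_tendsto htend
        filter_upwards [Ioo_mem_nhdsLT_of_mem (Set.mem_Ioc.mpr ⟨ht₀pos, le_refl t₀⟩)] with s hs
        exact (hbefore s hs.1.le hs.2 j).le
      have hieq0 : x t₀ i + ε * Real.exp (C * t₀) = 0 := le_antisymm hit₀ (hleft i)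
      set e0 : ℝ := ε * Real.exp (C * t₀) with he0
      have hE0 : 0 < e0 := by rw [he0]; positivity
      have hxj : ∀ j, -e0 ≤ x t₀ j := fun j => by linarith [hleft j]
      have hxi : x t₀ i = -e0 := by linarith [hieq0]
      have hfd : HasDerivAt (fun s => x s i + ε * Real.exp (C * s))
          ((if i = star then
            -∑ j ∈ Finset.univ.erase star, k j * (x t₀ star * a t₀ j - x t₀ j * a t₀ star)
           else k i * (x t₀ star * a t₀ i - x t₀ i * a t₀ star)) + ε * (C * Real.exp (C * t₀))) t₀ := by
        have h2 : HasDerivAt (fun s : ℝ => ε * Real.exp (C * s)) (ε * (C * Real.exp (C * t₀))) t₀ := by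
          have h3 := (((hasDerivAt_id t₀).const_mul C).exp).const_mul ε
          refine h3.congr_deriv ?_
          simp only [id_eq]
          ring
        exact (hx' i t₀ ht₀0).add h2
      have hmain : -(κ * A * e0) ≤ (if i = star then
            -∑ j ∈ Finset.univ.erase star, k j * (x t₀ star * a t₀ j - x t₀ j * a t₀ star)
           else k i * (x t₀ star * a t₀ i - x t₀ i * a t₀ star)) := by
        by_cases hi : i = star
        · rw [if_pos hi]
          have hxis : x t₀ star = -e0 := hi ▸ hxi
          have hsumub : ∑ j ∈ Finset.univ.erase star,
              k j * (x t₀ star * a t₀ j - x t₀ j * a t₀ star) ≤ κ * A * e0 := by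
            calc ∑ j ∈ Finset.univ.erase star, k j * (x t₀ star * a t₀ j - x t₀ j * a t₀ star)
                ≤ ∑ j ∈ Finset.univ.erase star, k j * (A * e0) := by
                  apply Finset.sum_le_sum
                  intro j hj
                  have h1 := hann t₀ ht₀0 j
                  have h3 := hann t₀ ht₀0 star
                  have h4 := haA t₀ ht₀0 star
                  have p1 : x t₀ star * a t₀ j ≤ 0 := by
                    rw [hxis]
                    exact mul_nonpos_of_nonpos_of_nonneg (by linarith) h1
                  have p2 : -(x t₀ j) ≤ e0 := by linarith [hxj j]
                  have p3 : -(x t₀ j) * a t₀ star ≤ e0 * a t₀ star :=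
                    mul_le_mul_of_nonneg_right p2 h3
                  have p4 : e0 * a t₀ star ≤ e0 * A := mul_le_mul_of_nonneg_left h4 hE0.le
                  have p5 : x t₀ star * a t₀ j - x t₀ j * a t₀ star ≤ A * e0 := by nlinarith
                  exact mul_le_mul_of_nonneg_left p5 (hk j).le
              _ = (∑ j ∈ Finset.univ.erase star, k j) * (A * e0) := by rw [← Finset.sum_mul]
              _ ≤ κ * (A * e0) := by
                  apply mul_le_mul_of_nonneg_right _ (by positivity)
                  rw [hκ]
                  exact Finset.sum_le_sum_of_subset_of_nonneg (Finset.subset_univ _)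
                    (fun j _ _ => (hk j).le)
              _ = κ * A * e0 := by ring
          linarith
        · rw [if_neg hi]
          have h1 := hann t₀ ht₀0 i
          have h2 := haA t₀ ht₀0 i
          have h3 := hann t₀ ht₀0 star
          have hxst : -e0 ≤ x t₀ star := hxj star
          have q1 : -e0 * a t₀ i ≤ x t₀ star * a t₀ i := mul_le_mul_of_nonneg_right hxst h1
          have q2 : -(e0 * A) ≤ -e0 * a t₀ i := by nlinarith
          have q3 : 0 ≤ e0 * a t₀ star := mul_nonneg hE0.le h3
          have q4 : -(e0 * A) ≤ x t₀ star * a t₀ i - x t₀ i * a t₀ star := by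
            rw [hxi]; nlinarith
          have q5 : k i * -(e0 * A) ≤ k i * (x t₀ star * a t₀ i - x t₀ i * a t₀ star) :=
            mul_le_mul_of_nonneg_left q4 (hk i).le
          have q6 : -(κ * A * e0) ≤ k i * -(e0 * A) := by
            have := hkκ i
            nlinarith [mul_nonneg hE0.le hApos.le, hk i]
          linarith
      have hdpos : 0 < (if i = star then
            -∑ j ∈ Finset.univ.erase star, k j * (x t₀ star * a t₀ j - x t₀ j * a t₀ star)
           else k i * (x t₀ star * a t₀ i - x t₀ i * a t₀ star)) + ε * (C * Real.exp (C * t₀)) := by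
        have hce : ε * (C * Real.exp (C * t₀)) = C * e0 := by rw [he0]; ring
        rw [hce]
        nlinarith [mul_le_mul_of_nonneg_right hCκA hE0.le]
      have hdle : (if i = star then
            -∑ j ∈ Finset.univ.erase star, k j * (x t₀ star * a t₀ j - x t₀ j * a t₀ star)
           else k i * (x t₀ star * a t₀ i - x t₀ i * a t₀ star)) + ε * (C * Real.exp (C * t₀)) ≤ 0 := by
        have hslope := hasDerivAt_iff_tendsto_slope.mp hfd
        have hmono2 : nhdsWithin t₀ (Set.Iio t₀) ≤ nhdsWithin t₀ {t₀}ᶜ :=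
          nhdsWithin_mono _ (fun s hs => ne_of_lt hs)
        apply le_of_tendsto (hslope.mono_left hmono2)
        filter_upwards [Ioo_mem_nhdsLT_of_mem (Set.mem_Ioc.mpr ⟨ht₀pos, le_refl t₀⟩)] with s hs
        have hspos := hbefore s hs.1.le hs.2 i
        have hsl : slope (fun u => x u i + ε * Real.exp (C * u)) t₀ s
            = (x s i + ε * Real.exp (C * s)) / (s - t₀) := by
          rw [slope_def_field, hieq0]
          ring
        rw [hsl]
        apply div_nonpos_of_nonneg_of_nonpos hspos.le
        linarith [hs.2]
      linarith
    intro t ht i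
    by_contra hneg
    push_neg at hneg
    have hexp0 : (0:ℝ) < Real.exp (C * t) := Real.exp_pos _
    have hεpos : 0 < -(x t i) / (2 * Real.exp (C * t)) := by
      apply div_pos (by linarith) (by positivity)
    have hkey := key _ hεpos t ht i
    have heq2 : -(x t i) / (2 * Real.exp (C * t)) * Real.exp (C * t) = -(x t i) / 2 := by
      field_simp
    rw [heq2] at hkey
    linarith
  -- upper bound by S
  have hxS : ∀ t, 0 ≤ t → ∀ i, x t i ≤ S := by
    intro t ht i
    have := hsum t ht
    have h1 : x t i ≤ ∑ j, x t j :=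
      Finset.single_le_sum (fun j _ => hnn t ht j) (Finset.mem_univ i)
    linarith
  -- equilibrium
  set Asum : ℝ := ∑ i, ainf i with hAsum
  have hAsumpos : 0 < Asum := Finset.sum_pos (fun i _ => hainf i) Finset.univ_nonempty
  set xinf : ι → ℝ := fun i => S * ainf i / Asum with hxinf
  have hSpos : 0 < S := hS
  have hxinfpos : ∀ i, 0 < xinf i := fun i =>
    div_pos (mul_pos hSpos (hainf i)) hAsumpos
  have hxinfsum : ∑ i, xinf i = S := by
    simp only [hxinf]
    rw [← Finset.sum_div, ← Finset.mul_sum, ← hAsum, mul_div_assoc, div_self (ne_of_gt hAsumpos), mul_one]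
  have hxinfS : ∀ i, xinf i ≤ S := by
    intro i
    have h4 : ainf i ≤ Asum :=
      Finset.single_le_sum (fun j _ => (hainf j).le) (Finset.mem_univ i)
    rw [hxinf, div_le_iff₀ hAsumpos]
    nlinarith
  -- main convergence
  have hyS : ∀ t, 0 ≤ t → ∀ i, |x t i - xinf i| ≤ S := by
    intro t ht i
    rw [abs_le]
    constructor
    · linarith [hnn t ht i, hxinfS i]
    · linarith [hxS t ht i, (hxinfpos i).le]
  have hystar : ∀ t, 0 ≤ t →
      x t star - xinf star = -∑ i ∈ Finset.univ.erase star, (x t i - xinf i) := by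
    intro t ht
    have h1 : ∑ i, (x t i - xinf i) = 0 := by
      rw [Finset.sum_sub_distrib, hsum t ht, hxinfsum, sub_self]
    have h2 : ∑ i ∈ Finset.univ.erase star, (x t i - xinf i) + (x t star - xinf star)
        = ∑ i, (x t i - xinf i) := Finset.sum_erase_add _ _ (Finset.mem_univ star)
    linarith
  set kmin : ℝ := Finset.univ.inf' Finset.univ_nonempty k with hkmin
  have hkminpos : 0 < kmin := by
    obtain ⟨j, -, hj⟩ := Finset.exists_mem_eq_inf' Finset.univ_nonempty k
    rw [hkmin, hj]
    exact hk j
  have hkmini : ∀ i, kmin ≤ k i := fun i => Finset.inf'_le _ (Finset.mem_univ i)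
  set lam0 : ℝ := 2 * kmin * ainf star with hlam0
  have hlam0pos : 0 < lam0 := by
    rw [hlam0]
    exact mul_pos (mul_pos two_pos hkminpos) (hainf star)
  set Cb : ℝ := ∑ i ∈ Finset.univ.erase star, 2 * S ^ 2 * Ca / ainf i with hCb
  have hCbnn : 0 ≤ Cb := Finset.sum_nonneg (fun i _ => div_nonneg (by positivity) (hainf i).le)
  set V : ℝ → ℝ := fun t =>
    ∑ i ∈ Finset.univ.erase star, (x t i - xinf i) ^ 2 / (2 * k i * ainf i) with hV
  set V' : ℝ → ℝ := fun t => ∑ i ∈ Finset.univ.erase star,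
    (x t i - xinf i) * (k i * (x t star * a t i - x t i * a t star)) / (k i * ainf i) with hV'def
  have hVnn : ∀ t, 0 ≤ V t := by
    intro t
    apply Finset.sum_nonneg
    intro i _
    have := hk i
    have := hainf i
    positivity
  have hVd : ∀ t, 0 ≤ t → HasDerivAt V (V' t) t := by
    intro t ht
    have h1 : ∀ i ∈ Finset.univ.erase star,
        HasDerivAt (fun s => (x s i - xinf i) ^ 2 / (2 * k i * ainf i))
          ((x t i - xinf i) * (k i * (x t star * a t i - x t i * a t star)) / (k i * ainf i)) t := by
      intro i hi
      have h2 := ((hx i (Finset.ne_of_mem_erase hi) t ht).sub_const (xinf i)).pow 2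
      have h3 := h2.div_const (2 * k i * ainf i)
      refine h3.congr_deriv ?_
      have hki := (hk i).ne'
      have hai := (hainf i).ne'
      field_simp
      ring
    exact HasDerivAt.fun_sum h1
  have hVle : ∀ t, 0 ≤ t → V' t ≤ -lam0 * V t + Cb * Real.exp (-mu * t) := by
    intro t ht
    have hterm : ∀ i ∈ Finset.univ.erase star,
        (x t i - xinf i) * (k i * (x t star * a t i - x t i * a t star)) / (k i * ainf i)
        = (x t i - xinf i) * (x t star - xinf star)
          - ainf star * (x t i - xinf i) ^ 2 / ainf i
          + (x t i - xinf i) * ((a t i - ainf i) * x t star - (a t star - ainf star) * x t i)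
              / ainf i := by
      intro i hi
      have hki := (hk i).ne'
      have hai := (hainf i).ne'
      have hxinfrel : xinf star * ainf i - xinf i * ainf star = 0 := by
        rw [hxinf]
        field_simp
        ring
      have hdecomp : x t star * a t i - x t i * a t star
          = ainf i * (x t star - xinf star) - ainf star * (x t i - xinf i)
            + ((a t i - ainf i) * x t star - (a t star - ainf star) * x t i)
            + (xinf star * ainf i - xinf i * ainf star) := by ring
      rw [hxinfrel, add_zero] at hdecomp
      rw [hdecomp]
      field_simp
    have hsplit : V' t = (∑ i ∈ Finset.univ.erase star, (x t i - xinf i)) * (x t star - xinf star)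
        - ∑ i ∈ Finset.univ.erase star, ainf star * (x t i - xinf i) ^ 2 / ainf i
        + ∑ i ∈ Finset.univ.erase star,
            (x t i - xinf i) * ((a t i - ainf i) * x t star - (a t star - ainf star) * x t i)
              / ainf i := by
      have : V' t = ∑ i ∈ Finset.univ.erase star,
          ((x t i - xinf i) * (x t star - xinf star)
          - ainf star * (x t i - xinf i) ^ 2 / ainf i
          + (x t i - xinf i) * ((a t i - ainf i) * x t star - (a t star - ainf star) * x t i)
              / ainf i) := Finset.sum_congr rfl hterm
      rw [this, Finset.sum_add_distrib, Finset.sum_sub_distrib, ← Finset.sum_mul]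
    have hterm1 : (∑ i ∈ Finset.univ.erase star, (x t i - xinf i)) * (x t star - xinf star) ≤ 0 := by
      have h1 := hystar t ht
      have : (∑ i ∈ Finset.univ.erase star, (x t i - xinf i)) * (x t star - xinf star)
          = -(x t star - xinf star) ^ 2 := by
        rw [h1]; ring
      rw [this]
      exact neg_nonpos.mpr (sq_nonneg _)
    have hterm2 : lam0 * V t ≤ ∑ i ∈ Finset.univ.erase star,
        ainf star * (x t i - xinf i) ^ 2 / ainf i := by
      have : lam0 * V t = ∑ i ∈ Finset.univ.erase star,
          lam0 * ((x t i - xinf i) ^ 2 / (2 * k i * ainf i)) := by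
        rw [hV]
        rw [Finset.mul_sum]
      rw [this]
      apply Finset.sum_le_sum
      intro i _
      have hki := hk i
      have hai := hainf i
      have he : ainf star * (x t i - xinf i) ^ 2 / ainf i
          = (2 * k i * ainf star) * ((x t i - xinf i) ^ 2 / (2 * k i * ainf i)) := by
        field_simp
      rw [he, hlam0]
      apply mul_le_mul_of_nonneg_right
      · nlinarith [hkmini i, hainf star]
      · positivity
    have hterm3 : ∑ i ∈ Finset.univ.erase star,
        (x t i - xinf i) * ((a t i - ainf i) * x t star - (a t star - ainf star) * x t i) / ainf i
        ≤ Cb * Real.exp (-mu * t) := by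
      rw [hCb, Finset.sum_mul]
      apply Finset.sum_le_sum
      intro i _
      have hai := hainf i
      have h1 : |(x t i - xinf i) * ((a t i - ainf i) * x t star - (a t star - ainf star) * x t i)
          / ainf i| ≤ 2 * S ^ 2 * Ca / ainf i * Real.exp (-mu * t) := by
        rw [abs_div, abs_mul, abs_of_pos hai]
        have h2 : |x t i - xinf i| ≤ S := hyS t ht i
        have h3 : |(a t i - ainf i) * x t star - (a t star - ainf star) * x t i|
            ≤ 2 * S * (Ca * Real.exp (-mu * t)) := by
          have h4 := ha t ht i
          have h5 := ha t ht star
          have h6 : |x t star| ≤ S := by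
            rw [abs_of_nonneg (hnn t ht star)]
            exact hxS t ht star
          have h7 : |x t i| ≤ S := by
            rw [abs_of_nonneg (hnn t ht i)]
            exact hxS t ht i
          calc |(a t i - ainf i) * x t star - (a t star - ainf star) * x t i|
              ≤ |(a t i - ainf i) * x t star| + |(a t star - ainf star) * x t i| := abs_sub _ _
            _ = |a t i - ainf i| * |x t star| + |a t star - ainf star| * |x t i| := by
                rw [abs_mul, abs_mul]
            _ ≤ Ca * Real.exp (-mu * t) * S + Ca * Real.exp (-mu * t) * S := by
                have e1 := Real.exp_pos (-mu * t)
                have := abs_nonneg (a t i - ainf i)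
                have := abs_nonneg (a t star - ainf star)
                have := abs_nonneg (x t star)
                have := abs_nonneg (x t i)
                apply add_le_add
                · apply mul_le_mul h4 h6 (abs_nonneg _) (by positivity)
                · apply mul_le_mul h5 h7 (abs_nonneg _) (by positivity)
            _ = 2 * S * (Ca * Real.exp (-mu * t)) := by ring
        have hSnn : 0 ≤ S := hS.le
        calc |x t i - xinf i| * |(a t i - ainf i) * x t star - (a t star - ainf star) * x t i|
              / ainf i
            ≤ S * (2 * S * (Ca * Real.exp (-mu * t))) / ainf i := by
              gcongr
          _ = 2 * S ^ 2 * Ca / ainf i * Real.exp (-mu * t) := by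
              field_simp
      calc (x t i - xinf i) * ((a t i - ainf i) * x t star - (a t star - ainf star) * x t i)
            / ainf i ≤ |(x t i - xinf i) * ((a t i - ainf i) * x t star
              - (a t star - ainf star) * x t i) / ainf i| := le_abs_self _
        _ ≤ 2 * S ^ 2 * Ca / ainf i * Real.exp (-mu * t) := h1
    rw [hsplit]
    linarith
  -- Grönwall application
  set mu2 : ℝ := (min mu lam0) / 2 with hmu2
  have hmu2pos : 0 < mu2 := by
    rw [hmu2]
    have := lt_min hmu hlam0pos
    linarith
  have hmu2mu : mu2 ≤ mu := by
    rw [hmu2]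
    have := min_le_left mu lam0
    linarith [hmu.le]
  have hmu2lt : mu2 < lam0 := by
    rw [hmu2]
    have := min_le_right mu lam0
    linarith
  have hb2 : ∀ t, 0 ≤ t → V' t ≤ -lam0 * V t + Cb * Real.exp (-mu2 * t) := by
    intro t ht
    have h1 := hVle t ht
    have h2 : Real.exp (-mu * t) ≤ Real.exp (-mu2 * t) :=
      Real.exp_le_exp.mpr (by nlinarith)
    nlinarith [Real.exp_pos (-mu * t)]
  have hgr := BW.gronwall hmu2pos hmu2lt hCbnn (hVnn 0) hVd hb2
  set KV : ℝ := V 0 + Cb / (lam0 - mu2) with hKV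
  have hKVnn : 0 ≤ KV := by
    rw [hKV]
    have := hVnn 0
    have : 0 ≤ Cb / (lam0 - mu2) := div_nonneg hCbnn (by linarith)
    linarith [hVnn 0]
  set lamf : ℝ := mu2 / 2 with hlamf
  have hlamfpos : 0 < lamf := by rw [hlamf]; linarith
  have hexpsq : ∀ t : ℝ, Real.exp (-mu2 * t) = (Real.exp (-lamf * t)) ^ 2 := by
    intro t
    rw [sq, ← Real.exp_add, hlamf]
    congr 1
    ring
  have hcoordbd : ∀ i ∈ Finset.univ.erase star, ∀ t, 0 ≤ t →
      |x t i - xinf i| ≤ Real.sqrt (2 * k i * ainf i * KV) * Real.exp (-lamf * t) := by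
    intro i hi t ht
    have hki := hk i
    have hai := hainf i
    have h1 : (x t i - xinf i) ^ 2 / (2 * k i * ainf i) ≤ V t := by
      apply Finset.single_le_sum _ hi
      intro j _
      have := hk j
      have := hainf j
      positivity
    have h2 : V t ≤ KV * Real.exp (-mu2 * t) := hgr t ht
    have h3 : (x t i - xinf i) ^ 2 ≤ 2 * k i * ainf i * KV * Real.exp (-mu2 * t) := by
      have h4 : (x t i - xinf i) ^ 2 = (2 * k i * ainf i) * ((x t i - xinf i) ^ 2 / (2 * k i * ainf i)) := by
        field_simp
      rw [h4]
      calc (2 * k i * ainf i) * ((x t i - xinf i) ^ 2 / (2 * k i * ainf i))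
          ≤ (2 * k i * ainf i) * (KV * Real.exp (-mu2 * t)) := by
            apply mul_le_mul_of_nonneg_left (h1.trans h2) (by positivity)
        _ = 2 * k i * ainf i * KV * Real.exp (-mu2 * t) := by ring
    have h5 : |x t i - xinf i| = Real.sqrt ((x t i - xinf i) ^ 2) := (Real.sqrt_sq_eq_abs _).symm
    rw [h5]
    calc Real.sqrt ((x t i - xinf i) ^ 2) ≤ Real.sqrt (2 * k i * ainf i * KV * Real.exp (-mu2 * t)) :=
          Real.sqrt_le_sqrt h3
      _ = Real.sqrt (2 * k i * ainf i * KV) * Real.exp (-lamf * t) := by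
          rw [hexpsq t, Real.sqrt_mul (by positivity), Real.sqrt_sq (Real.exp_nonneg _)]
  set Ksum : ℝ := ∑ i ∈ Finset.univ.erase star, Real.sqrt (2 * k i * ainf i * KV) with hKsum
  have hKsumnn : 0 ≤ Ksum := Finset.sum_nonneg (fun i _ => Real.sqrt_nonneg _)
  refine ⟨xinf, hxinfpos, hnn, Ksum + 1, lamf, by linarith, hlamfpos, ?_⟩
  intro t ht i
  have hexppos := Real.exp_pos (-lamf * t)
  by_cases hi : i = star
  · rw [hi]
    have h1 : |x t star - xinf star| ≤ ∑ i ∈ Finset.univ.erase star, |x t i - xinf i| := by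
      rw [hystar t ht, abs_neg]
      exact Finset.abs_sum_le_sum_abs _ _
    have h2 : ∑ i ∈ Finset.univ.erase star, |x t i - xinf i|
        ≤ ∑ i ∈ Finset.univ.erase star, Real.sqrt (2 * k i * ainf i * KV) * Real.exp (-lamf * t) :=
      Finset.sum_le_sum (fun i hi => hcoordbd i hi t ht)
    have h3 : ∑ i ∈ Finset.univ.erase star, Real.sqrt (2 * k i * ainf i * KV) * Real.exp (-lamf * t)
        = Ksum * Real.exp (-lamf * t) := by
      rw [hKsum, Finset.sum_mul]
    nlinarith
  · have h1 := hcoordbd i (Finset.mem_erase.mpr ⟨hi, Finset.mem_univ i⟩) t ht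
    have h2 : Real.sqrt (2 * k i * ainf i * KV) ≤ Ksum := by
      rw [hKsum]
      apply Finset.single_le_sum (fun j _ => Real.sqrt_nonneg _)
        (Finset.mem_erase.mpr ⟨hi, Finset.mem_univ i⟩)
    nlinarith

lemma BW.combine (s : Finset ℕ) (F : ℕ → ℝ → ℝ)
    (h : ∀ l ∈ s, ∃ K lam : ℝ, 0 < K ∧ 0 < lam ∧ ∀ t, 0 ≤ t → F l t ≤ K * Real.exp (-lam * t)) :
    ∃ K lam : ℝ, 0 < K ∧ 0 < lam ∧ ∀ t, 0 ≤ t → ∑ l ∈ s, F l t ≤ K * Real.exp (-lam * t) := by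
  classical
  induction s using Finset.cons_induction with
  | empty =>
    refine ⟨1, 1, one_pos, one_pos, fun t ht => ?_⟩
    simp
    positivity
  | cons a s ha ih =>
    obtain ⟨K1, l1, hK1, hl1, hb1⟩ := h a (Finset.mem_cons_self a s)
    obtain ⟨K2, l2, hK2, hl2, hb2⟩ := ih (fun l hl => h l (Finset.mem_cons.mpr (Or.inr hl)))
    refine ⟨K1 + K2, min l1 l2, by linarith, lt_min hl1 hl2, ?_⟩
    intro t ht
    rw [Finset.sum_cons]
    have e1 : Real.exp (-l1 * t) ≤ Real.exp (-(min l1 l2) * t) :=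
      Real.exp_le_exp.mpr (by nlinarith [min_le_left l1 l2])
    have e2 : Real.exp (-l2 * t) ≤ Real.exp (-(min l1 l2) * t) :=
      Real.exp_le_exp.mpr (by nlinarith [min_le_right l1 l2])
    have m1 := mul_le_mul_of_nonneg_left e1 hK1.le
    have m2 := mul_le_mul_of_nonneg_left e2 hK2.le
    have := hb1 t ht
    have := hb2 t ht
    nlinarith

lemma BW.combine2 {F G : ℝ → ℝ} {K1 l1 K2 l2 : ℝ} (hK1 : 0 < K1) (hl1 : 0 < l1)
    (hK2 : 0 < K2) (hl2 : 0 < l2)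
    (h1 : ∀ t, 0 ≤ t → F t ≤ K1 * Real.exp (-l1 * t))
    (h2 : ∀ t, 0 ≤ t → G t ≤ K2 * Real.exp (-l2 * t)) :
    ∃ K lam : ℝ, 0 < K ∧ 0 < lam ∧ ∀ t, 0 ≤ t → F t + G t ≤ K * Real.exp (-lam * t) := by
  refine ⟨K1 + K2, min l1 l2, by linarith, lt_min hl1 hl2, ?_⟩
  intro t ht
  have e1 : Real.exp (-l1 * t) ≤ Real.exp (-(min l1 l2) * t) :=
    Real.exp_le_exp.mpr (by nlinarith [min_le_left l1 l2])
  have e2 : Real.exp (-l2 * t) ≤ Real.exp (-(min l1 l2) * t) :=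
    Real.exp_le_exp.mpr (by nlinarith [min_le_right l1 l2])
  have m1 := mul_le_mul_of_nonneg_left e1 hK1.le
  have m2 := mul_le_mul_of_nonneg_left e2 hK2.le
  have := h1 t ht
  have := h2 t ht
  nlinarith

lemma BW.abs_sum_mul {H : Type*} [Fintype H] (f c w : H → ℝ) (hw : ∀ g, 0 ≤ w g)
    (E : ℝ) (hb : ∀ g, |f g - c g| ≤ E) :
    |∑ g, f g * w g - ∑ g, c g * w g| ≤ E * ∑ g, w g := by
  have h1 : ∑ g, f g * w g - ∑ g, c g * w g = ∑ g, (f g - c g) * w g := by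
    rw [← Finset.sum_sub_distrib]
    exact Finset.sum_congr rfl (fun g _ => by ring)
  rw [h1]
  calc |∑ g, (f g - c g) * w g| ≤ ∑ g, |(f g - c g) * w g| := Finset.abs_sum_le_sum_abs _ _
    _ = ∑ g, |f g - c g| * w g :=
        Finset.sum_congr rfl (fun g _ => by rw [abs_mul, abs_of_nonneg (hw g)])
    _ ≤ ∑ g, E * w g := Finset.sum_le_sum (fun g _ => mul_le_mul_of_nonneg_right (hb g) (hw g))
    _ = E * ∑ g, w g := by rw [← Finset.mul_sum]

lemma BW.prod_bound {af bf ca cb Ka Kb Ma Mb Ea Eb E : ℝ}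
    (h1 : |af - ca| ≤ Ka * Ea) (h2 : |bf - cb| ≤ Kb * Eb)
    (hca : |ca| ≤ Ma) (hcb : |cb| ≤ Mb)
    (hEa1 : Ea ≤ 1) (hEa : 0 < Ea) (hEb : 0 < Eb)
    (hKa : 0 < Ka) (hKb : 0 < Kb) (hMa : 0 ≤ Ma) (hMb : 0 ≤ Mb)
    (hEaE : Ea ≤ E) (hEbE : Eb ≤ E) :
    |af * bf - ca * cb| ≤ ((Ma + Ka) * Kb + Mb * Ka) * E := by
  have haf : |af| ≤ Ma + Ka := by
    have h3 : af = (af - ca) + ca := by ring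
    calc |af| = |(af - ca) + ca| := by rw [← h3]
      _ ≤ |af - ca| + |ca| := abs_add_le _ _
      _ ≤ Ka * Ea + Ma := add_le_add h1 hca
      _ ≤ Ma + Ka := by nlinarith
  have key : |af * bf - ca * cb| ≤ |af| * |bf - cb| + |af - ca| * |cb| := by
    calc |af * bf - ca * cb| = |af * (bf - cb) + (af - ca) * cb| := by congr 1; ring
      _ ≤ |af * (bf - cb)| + |(af - ca) * cb| := abs_add_le _ _
      _ = |af| * |bf - cb| + |af - ca| * |cb| := by rw [abs_mul, abs_mul]
  have s1 : |af| * |bf - cb| ≤ (Ma + Ka) * (Kb * Eb) :=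
    mul_le_mul haf h2 (abs_nonneg _) (by linarith [abs_nonneg af])
  have s2 : |af - ca| * |cb| ≤ (Ka * Ea) * Mb :=
    mul_le_mul h1 hcb (abs_nonneg _) (by positivity)
  have s3 : (Ma + Ka) * (Kb * Eb) ≤ (Ma + Ka) * Kb * E := by
    have := mul_le_mul_of_nonneg_left hEbE (mul_nonneg (by linarith : (0:ℝ) ≤ Ma + Ka) hKb.le)
    nlinarith
  have s4 : (Ka * Ea) * Mb ≤ Mb * Ka * E := by
    have := mul_le_mul_of_nonneg_left hEaE (mul_nonneg hKa.le hMb)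
    nlinarith
  nlinarith

set_option maxHeartbeats 1600000 in
/-- The Expectation-step reaction systems of the Baum-Welch reaction network (the forward,
backward and expectation networks) converge exponentially fast when the parameters `π`,
`θ`, `ψ` are held fixed at a positive point: under the mass-action ODEs with positive
petal rate constants `kα`, `kβ`, `kγ`, `kξ`, nonnegative initial conditions with the
stated positive initial totals, the species `α`, `β`, `γ`, `ξ` converge exponentially
fast to some limits `α∞`, `β∞`, `γ∞`, `ξ∞`. -/
theorem expectation_step_exponential_convergence
    {H V : Type*} [Fintype H] [Fintype V] [Nonempty H] [Nonempty V] [DecidableEq H]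
    (hstar : H) (L : ℕ) (hL : 2 ≤ L) (v : ℕ → V)
    (π : H → ℝ) (θ : H → H → ℝ) (ψ : H → V → ℝ)
    (hπpos : ∀ h, 0 < π h) (hθpos : ∀ g h, 0 < θ g h) (hψpos : ∀ h w, 0 < ψ h w)
    (kα kβ kγ : ℕ → H → ℝ) (kξ : ℕ → H → H → ℝ)
    (hkα : ∀ l h, 0 < kα l h) (hkβ : ∀ l h, 0 < kβ l h)
    (hkγ : ∀ l h, 0 < kγ l h) (hkξ : ∀ l g h, 0 < kξ l g h)
    (α β γ : ℝ → ℕ → H → ℝ) (ξ : ℝ → ℕ → H → H → ℝ)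
    -- forward network, position 1, non-leader species:
    (hα1 : ∀ h, h ≠ hstar → ∀ t : ℝ, 0 ≤ t →
      HasDerivAt (fun s => α s 1 h)
        (kα 1 h * (α t 1 hstar * (π h * ψ h (v 1))
          - α t 1 h * (π hstar * ψ hstar (v 1)))) t)
    -- forward network, position 1, leader species:
    (hα1' : ∀ t : ℝ, 0 ≤ t →
      HasDerivAt (fun s => α s 1 hstar)
        (-∑ h ∈ Finset.univ.erase hstar,
          kα 1 h * (α t 1 hstar * (π h * ψ h (v 1))
            - α t 1 h * (π hstar * ψ hstar (v 1)))) t)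
    -- forward network, positions 2 ≤ l ≤ L, non-leader species:
    (hα : ∀ l, 2 ≤ l → l ≤ L → ∀ h, h ≠ hstar → ∀ t : ℝ, 0 ≤ t →
      HasDerivAt (fun s => α s l h)
        (kα l h * (α t l hstar * ∑ g, α t (l - 1) g * θ g h * ψ h (v l)
          - α t l h * ∑ g, α t (l - 1) g * θ g hstar * ψ hstar (v l))) t)
    -- forward network, positions 2 ≤ l ≤ L, leader species:
    (hα' : ∀ l, 2 ≤ l → l ≤ L → ∀ t : ℝ, 0 ≤ t →
      HasDerivAt (fun s => α s l hstar)
        (-∑ h ∈ Finset.univ.erase hstar,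
          kα l h * (α t l hstar * ∑ g, α t (l - 1) g * θ g h * ψ h (v l)
            - α t l h * ∑ g, α t (l - 1) g * θ g hstar * ψ hstar (v l))) t)
    -- the species β_{L h} do not react:
    (hβL : ∀ h, ∀ t : ℝ, 0 ≤ t → β t L h = β 0 L h)
    -- backward network, positions 1 ≤ l ≤ L - 1, non-leader species:
    (hβ : ∀ l, 1 ≤ l → l ≤ L - 1 → ∀ h, h ≠ hstar → ∀ t : ℝ, 0 ≤ t →
      HasDerivAt (fun s => β s l h)
        (kβ l h * (β t l hstar * ∑ g, θ h g * ψ g (v (l + 1)) * β t (l + 1) g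
          - β t l h * ∑ g, θ hstar g * ψ g (v (l + 1)) * β t (l + 1) g)) t)
    -- backward network, positions 1 ≤ l ≤ L - 1, leader species:
    (hβ' : ∀ l, 1 ≤ l → l ≤ L - 1 → ∀ t : ℝ, 0 ≤ t →
      HasDerivAt (fun s => β s l hstar)
        (-∑ h ∈ Finset.univ.erase hstar,
          kβ l h * (β t l hstar * ∑ g, θ h g * ψ g (v (l + 1)) * β t (l + 1) g
            - β t l h * ∑ g, θ hstar g * ψ g (v (l + 1)) * β t (l + 1) g)) t)
    -- expectation network for γ, non-leader species:
    (hγ : ∀ l, 1 ≤ l → l ≤ L - 1 → ∀ h, h ≠ hstar → ∀ t : ℝ, 0 ≤ t →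
      HasDerivAt (fun s => γ s l h)
        (kγ l h * (γ t l hstar * (α t l h * β t l h)
          - γ t l h * (α t l hstar * β t l hstar))) t)
    -- expectation network for γ, leader species:
    (hγ' : ∀ l, 1 ≤ l → l ≤ L - 1 → ∀ t : ℝ, 0 ≤ t →
      HasDerivAt (fun s => γ s l hstar)
        (-∑ h ∈ Finset.univ.erase hstar,
          kγ l h * (γ t l hstar * (α t l h * β t l h)
            - γ t l h * (α t l hstar * β t l hstar))) t)
    -- expectation network for ξ, non-leader species:
    (hξ : ∀ l, 1 ≤ l → l ≤ L - 1 → ∀ g h, (g, h) ≠ (hstar, hstar) → ∀ t : ℝ, 0 ≤ t →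
      HasDerivAt (fun s => ξ s l g h)
        (kξ l g h * (ξ t l hstar hstar
            * (α t l g * θ g h * ψ h (v (l + 1)) * β t (l + 1) h)
          - ξ t l g h
            * (α t l hstar * θ hstar hstar * ψ hstar (v (l + 1)) * β t (l + 1) hstar))) t)
    -- expectation network for ξ, leader species:
    (hξ' : ∀ l, 1 ≤ l → l ≤ L - 1 → ∀ t : ℝ, 0 ≤ t →
      HasDerivAt (fun s => ξ s l hstar hstar)
        (-∑ p ∈ Finset.univ.erase ((hstar, hstar) : H × H),
          kξ l p.1 p.2 * (ξ t l hstar hstar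
              * (α t l p.1 * θ p.1 p.2 * ψ p.2 (v (l + 1)) * β t (l + 1) p.2)
            - ξ t l p.1 p.2
              * (α t l hstar * θ hstar hstar * ψ hstar (v (l + 1))
                  * β t (l + 1) hstar))) t)
    -- nonnegative initial conditions:
    (hα0 : ∀ l h, 0 ≤ α 0 l h) (hβ0 : ∀ l h, 0 ≤ β 0 l h)
    (hγ0 : ∀ l h, 0 ≤ γ 0 l h) (hξ0 : ∀ l g h, 0 ≤ ξ 0 l g h)
    -- β_{L h}(0) > 0 and positive initial totals:
    (hβLpos : ∀ h, 0 < β 0 L h)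
    (hαtot : ∀ l, 1 ≤ l → l ≤ L → 0 < ∑ h, α 0 l h)
    (hβtot : ∀ l, 1 ≤ l → l ≤ L - 1 → 0 < ∑ h, β 0 l h)
    (hγtot : ∀ l, 1 ≤ l → l ≤ L - 1 → 0 < ∑ h, γ 0 l h)
    (hξtot : ∀ l, 1 ≤ l → l ≤ L - 1 → 0 < ∑ g, ∑ h, ξ 0 l g h) :
    ∃ (αinf βinf γinf : ℕ → H → ℝ) (ξinf : ℕ → H → H → ℝ) (K lam : ℝ),
      0 < K ∧ 0 < lam ∧ ∀ t : ℝ, 0 ≤ t →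
        (∑ l ∈ Finset.Icc 1 L, ∑ h, |α t l h - αinf l h|)
          + (∑ l ∈ Finset.Icc 1 L, ∑ h, |β t l h - βinf l h|)
          + (∑ l ∈ Finset.Icc 1 (L - 1), ∑ h, |γ t l h - γinf l h|)
          + (∑ l ∈ Finset.Icc 1 (L - 1), ∑ g, ∑ h, |ξ t l g h - ξinf l g h|)
          ≤ K * Real.exp (-lam * t) := by
  classical
  -- forward cascade
  have αkey : ∀ l : ℕ, 1 ≤ l → l ≤ L →
      ∃ c : H → ℝ, (∀ h, 0 < c h) ∧ (∀ t, 0 ≤ t → ∀ h, 0 ≤ α t l h) ∧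
        ∃ K lam : ℝ, 0 < K ∧ 0 < lam ∧
          ∀ t, 0 ≤ t → ∀ h, |α t l h - c h| ≤ K * Real.exp (-lam * t) := by
    intro l hl
    induction l, hl using Nat.le_induction with
    | base =>
      intro hle
      exact BW.petal hstar (kα 1) (hkα 1)
        (fun _ h => π h * ψ h (v 1)) (fun h => π h * ψ h (v 1))
        (fun h => mul_pos (hπpos h) (hψpos h (v 1)))
        (fun t ht h => (mul_pos (hπpos h) (hψpos h (v 1))).le)
        1 1 one_pos one_pos
        (fun t ht h => by
          simp only [sub_self, abs_zero, one_mul]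
          positivity)
        (fun t h => α t 1 h) hα1 hα1' (hα0 1) (hαtot 1 le_rfl hle)
    | succ l hl ih =>
      intro hle
      obtain ⟨c, hcpos, hcnn, K, lam, hK, hlam, hb⟩ := ih (by omega)
      set B : ℝ := ∑ g, ∑ h', θ g h' * ψ h' (v (l + 1)) with hB
      have hBpos : 0 < B :=
        Finset.sum_pos (fun g _ => Finset.sum_pos
          (fun h' _ => mul_pos (hθpos g h') (hψpos h' (v (l + 1)))) Finset.univ_nonempty)
          Finset.univ_nonempty
      have hainfpos : ∀ h, 0 < ∑ g, c g * θ g h * ψ h (v (l + 1)) := fun h =>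
        Finset.sum_pos (fun g _ =>
          mul_pos (mul_pos (hcpos g) (hθpos g h)) (hψpos h (v (l + 1)))) Finset.univ_nonempty
      have hannp : ∀ t, 0 ≤ t → ∀ h, 0 ≤ ∑ g, α t l g * θ g h * ψ h (v (l + 1)) :=
        fun t ht h => Finset.sum_nonneg (fun g _ =>
          mul_nonneg (mul_nonneg (hcnn t ht g) (hθpos g h).le) (hψpos h (v (l + 1))).le)
      have hCab : ∀ t, 0 ≤ t → ∀ h,
          |∑ g, α t l g * θ g h * ψ h (v (l + 1)) - ∑ g, c g * θ g h * ψ h (v (l + 1))|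
            ≤ (K * B + 1) * Real.exp (-lam * t) := by
        intro t ht h
        have hre1 : ∑ g, α t l g * θ g h * ψ h (v (l + 1))
            = ∑ g, α t l g * (θ g h * ψ h (v (l + 1))) :=
          Finset.sum_congr rfl (fun g _ => by ring)
        have hre2 : ∑ g, c g * θ g h * ψ h (v (l + 1))
            = ∑ g, c g * (θ g h * ψ h (v (l + 1))) :=
          Finset.sum_congr rfl (fun g _ => by ring)
        rw [hre1, hre2]
        have h1 := BW.abs_sum_mul (fun g => α t l g) c (fun g => θ g h * ψ h (v (l + 1)))
          (fun g => (mul_pos (hθpos g h) (hψpos h (v (l + 1)))).le)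
          (K * Real.exp (-lam * t)) (fun g => hb t ht g)
        have h2 : ∑ g, θ g h * ψ h (v (l + 1)) ≤ B := by
          rw [hB]
          apply Finset.sum_le_sum
          intro g _
          exact Finset.single_le_sum
            (fun h' _ => (mul_pos (hθpos g h') (hψpos h' (v (l + 1)))).le) (Finset.mem_univ h)
        have he := Real.exp_pos (-lam * t)
        have h3 : 0 ≤ ∑ g, θ g h * ψ h (v (l + 1)) :=
          Finset.sum_nonneg (fun g _ => (mul_pos (hθpos g h) (hψpos h (v (l + 1)))).le)
        calc |∑ g, α t l g * (θ g h * ψ h (v (l + 1)))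
              - ∑ g, c g * (θ g h * ψ h (v (l + 1)))|
            ≤ K * Real.exp (-lam * t) * ∑ g, θ g h * ψ h (v (l + 1)) := h1
          _ ≤ (K * B + 1) * Real.exp (-lam * t) := by
              nlinarith [mul_le_mul_of_nonneg_left h2 (mul_nonneg hK.le he.le)]
      exact BW.petal hstar (kα (l + 1)) (hkα (l + 1))
        (fun t h => ∑ g, α t l g * θ g h * ψ h (v (l + 1)))
        (fun h => ∑ g, c g * θ g h * ψ h (v (l + 1)))
        hainfpos hannp (K * B + 1) lam (by positivity) hlam hCab
        (fun t h => α t (l + 1) h)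
        (fun h hh t ht => hα (l + 1) (by omega) hle h hh t ht)
        (fun t ht => hα' (l + 1) (by omega) hle t ht)
        (hα0 (l + 1)) (hαtot (l + 1) (by omega) hle)
  -- backward cascade
  have βkey : ∀ d : ℕ, ∀ l : ℕ, l + d = L → 1 ≤ l →
      ∃ c : H → ℝ, (∀ h, 0 < c h) ∧ (∀ t, 0 ≤ t → ∀ h, 0 ≤ β t l h) ∧
        ∃ K lam : ℝ, 0 < K ∧ 0 < lam ∧
          ∀ t, 0 ≤ t → ∀ h, |β t l h - c h| ≤ K * Real.exp (-lam * t) := by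
    intro d
    induction d with
    | zero =>
      intro l hld hl1
      have hlL : l = L := by omega
      subst hlL
      refine ⟨fun h => β 0 l h, hβLpos, ?_, 1, 1, one_pos, one_pos, ?_⟩
      · intro t ht h
        rw [hβL h t ht]
        exact hβ0 l h
      · intro t ht h
        rw [hβL h t ht]
        simp only [sub_self, abs_zero, one_mul]
        positivity
    | succ d ih =>
      intro l hld hl1
      obtain ⟨c, hcpos, hcnn, K, lam, hK, hlam, hb⟩ := ih (l + 1) (by omega) (by omega)
      have hll : l ≤ L - 1 := by omega
      set B : ℝ := ∑ h', ∑ g, θ h' g * ψ g (v (l + 1)) with hB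
      have hBpos : 0 < B :=
        Finset.sum_pos (fun h' _ => Finset.sum_pos
          (fun g _ => mul_pos (hθpos h' g) (hψpos g (v (l + 1)))) Finset.univ_nonempty)
          Finset.univ_nonempty
      have hainfpos : ∀ h, 0 < ∑ g, θ h g * ψ g (v (l + 1)) * c g := fun h =>
        Finset.sum_pos (fun g _ =>
          mul_pos (mul_pos (hθpos h g) (hψpos g (v (l + 1)))) (hcpos g)) Finset.univ_nonempty
      have hannp : ∀ t, 0 ≤ t → ∀ h, 0 ≤ ∑ g, θ h g * ψ g (v (l + 1)) * β t (l + 1) g :=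
        fun t ht h => Finset.sum_nonneg (fun g _ =>
          mul_nonneg (mul_nonneg (hθpos h g).le (hψpos g (v (l + 1))).le) (hcnn t ht g))
      have hCab : ∀ t, 0 ≤ t → ∀ h,
          |∑ g, θ h g * ψ g (v (l + 1)) * β t (l + 1) g
            - ∑ g, θ h g * ψ g (v (l + 1)) * c g|
            ≤ (K * B + 1) * Real.exp (-lam * t) := by
        intro t ht h
        have hre1 : ∑ g, θ h g * ψ g (v (l + 1)) * β t (l + 1) g
            = ∑ g, β t (l + 1) g * (θ h g * ψ g (v (l + 1))) :=
          Finset.sum_congr rfl (fun g _ => by ring)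
        have hre2 : ∑ g, θ h g * ψ g (v (l + 1)) * c g
            = ∑ g, c g * (θ h g * ψ g (v (l + 1))) :=
          Finset.sum_congr rfl (fun g _ => by ring)
        rw [hre1, hre2]
        have h1 := BW.abs_sum_mul (fun g => β t (l + 1) g) c (fun g => θ h g * ψ g (v (l + 1)))
          (fun g => (mul_pos (hθpos h g) (hψpos g (v (l + 1)))).le)
          (K * Real.exp (-lam * t)) (fun g => hb t ht g)
        have h2 : ∑ g, θ h g * ψ g (v (l + 1)) ≤ B := by
          rw [hB]
          exact Finset.single_le_sum (fun h' _ => Finset.sum_nonneg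
            (fun g _ => (mul_pos (hθpos h' g) (hψpos g (v (l + 1)))).le)) (Finset.mem_univ h)
        have he := Real.exp_pos (-lam * t)
        have h3 : 0 ≤ ∑ g, θ h g * ψ g (v (l + 1)) :=
          Finset.sum_nonneg (fun g _ => (mul_pos (hθpos h g) (hψpos g (v (l + 1)))).le)
        calc |∑ g, β t (l + 1) g * (θ h g * ψ g (v (l + 1)))
              - ∑ g, c g * (θ h g * ψ g (v (l + 1)))|
            ≤ K * Real.exp (-lam * t) * ∑ g, θ h g * ψ g (v (l + 1)) := h1
          _ ≤ (K * B + 1) * Real.exp (-lam * t) := by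
              nlinarith [mul_le_mul_of_nonneg_left h2 (mul_nonneg hK.le he.le)]
      exact BW.petal hstar (kβ l) (hkβ l)
        (fun t h => ∑ g, θ h g * ψ g (v (l + 1)) * β t (l + 1) g)
        (fun h => ∑ g, θ h g * ψ g (v (l + 1)) * c g)
        hainfpos hannp (K * B + 1) lam (by positivity) hlam hCab
        (fun t h => β t l h)
        (fun h hh t ht => hβ l hl1 hll h hh t ht)
        (fun t ht => hβ' l hl1 hll t ht)
        (hβ0 l) (hβtot l hl1 hll)
  -- gamma layers
  have γkey : ∀ l : ℕ, 1 ≤ l → l ≤ L - 1 →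
      ∃ c : H → ℝ, (∀ h, 0 < c h) ∧ (∀ t, 0 ≤ t → ∀ h, 0 ≤ γ t l h) ∧
        ∃ K lam : ℝ, 0 < K ∧ 0 < lam ∧
          ∀ t, 0 ≤ t → ∀ h, |γ t l h - c h| ≤ K * Real.exp (-lam * t) := by
    intro l h1 h2
    obtain ⟨ca, hcapos, hcann, Ka, lama, hKa, hlama, hba⟩ := αkey l h1 (by omega)
    obtain ⟨cb, hcbpos, hcbnn, Kb, lamb, hKb, hlamb, hbb⟩ := βkey (L - l) l (by omega) h1
    set Ma : ℝ := ∑ h, ca h with hMa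
    set Mb : ℝ := ∑ h, cb h with hMb
    have hMapos : 0 < Ma := Finset.sum_pos (fun h _ => hcapos h) Finset.univ_nonempty
    have hMbpos : 0 < Mb := Finset.sum_pos (fun h _ => hcbpos h) Finset.univ_nonempty
    have hcaM : ∀ h, |ca h| ≤ Ma := fun h => by
      rw [abs_of_pos (hcapos h)]
      exact Finset.single_le_sum (fun j _ => (hcapos j).le) (Finset.mem_univ h)
    have hcbM : ∀ h, |cb h| ≤ Mb := fun h => by
      rw [abs_of_pos (hcbpos h)]
      exact Finset.single_le_sum (fun j _ => (hcbpos j).le) (Finset.mem_univ h)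
    set CC : ℝ := (Ma + Ka) * Kb + Mb * Ka with hCC
    have hCCpos : 0 < CC := by rw [hCC]; positivity
    have hCab : ∀ t, 0 ≤ t → ∀ h,
        |α t l h * β t l h - ca h * cb h|
          ≤ (CC + 1) * Real.exp (-(min lama lamb) * t) := by
      intro t ht h
      have hEa : (0:ℝ) < Real.exp (-lama * t) := Real.exp_pos _
      have hEb : (0:ℝ) < Real.exp (-lamb * t) := Real.exp_pos _
      have hE : (0:ℝ) < Real.exp (-(min lama lamb) * t) := Real.exp_pos _
      have hEa1 : Real.exp (-lama * t) ≤ 1 := Real.exp_le_one_iff.mpr (by nlinarith)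
      have hEaE : Real.exp (-lama * t) ≤ Real.exp (-(min lama lamb) * t) :=
        Real.exp_le_exp.mpr (by nlinarith [min_le_left lama lamb])
      have hEbE : Real.exp (-lamb * t) ≤ Real.exp (-(min lama lamb) * t) :=
        Real.exp_le_exp.mpr (by nlinarith [min_le_right lama lamb])
      have hpb := BW.prod_bound (hba t ht h) (hbb t ht h) (hcaM h) (hcbM h)
        hEa1 hEa hEb hKa hKb hMapos.le hMbpos.le hEaE hEbE
      rw [← hCC] at hpb
      nlinarith
    exact BW.petal hstar (kγ l) (hkγ l)
      (fun t h => α t l h * β t l h)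
      (fun h => ca h * cb h)
      (fun h => mul_pos (hcapos h) (hcbpos h))
      (fun t ht h => mul_nonneg (hcann t ht h) (hcbnn t ht h))
      (CC + 1) (min lama lamb) (by positivity) (lt_min hlama hlamb) hCab
      (fun t h => γ t l h)
      (fun h hh t ht => hγ l h1 h2 h hh t ht)
      (fun t ht => hγ' l h1 h2 t ht)
      (hγ0 l) (hγtot l h1 h2)
  -- xi layers
  have ξkey : ∀ l : ℕ, 1 ≤ l → l ≤ L - 1 →
      ∃ c : H × H → ℝ, (∀ p, 0 < c p) ∧ (∀ t, 0 ≤ t → ∀ p : H × H, 0 ≤ ξ t l p.1 p.2) ∧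
        ∃ K lam : ℝ, 0 < K ∧ 0 < lam ∧
          ∀ t, 0 ≤ t → ∀ p : H × H, |ξ t l p.1 p.2 - c p| ≤ K * Real.exp (-lam * t) := by
    intro l h1 h2
    obtain ⟨ca, hcapos, hcann, Ka, lama, hKa, hlama, hba⟩ := αkey l h1 (by omega)
    obtain ⟨cb, hcbpos, hcbnn, Kb, lamb, hKb, hlamb, hbb⟩ :=
      βkey (L - (l + 1)) (l + 1) (by omega) (by omega)
    set Ma : ℝ := ∑ h, ca h with hMa
    set Mb : ℝ := ∑ h, cb h with hMb
    have hMapos : 0 < Ma := Finset.sum_pos (fun h _ => hcapos h) Finset.univ_nonempty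
    have hMbpos : 0 < Mb := Finset.sum_pos (fun h _ => hcbpos h) Finset.univ_nonempty
    have hcaM : ∀ h, |ca h| ≤ Ma := fun h => by
      rw [abs_of_pos (hcapos h)]
      exact Finset.single_le_sum (fun j _ => (hcapos j).le) (Finset.mem_univ h)
    have hcbM : ∀ h, |cb h| ≤ Mb := fun h => by
      rw [abs_of_pos (hcbpos h)]
      exact Finset.single_le_sum (fun j _ => (hcbpos j).le) (Finset.mem_univ h)
    set Bθ : ℝ := ∑ g, ∑ h', θ g h' * ψ h' (v (l + 1)) with hBθ
    have hBθpos : 0 < Bθ :=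
      Finset.sum_pos (fun g _ => Finset.sum_pos
        (fun h' _ => mul_pos (hθpos g h') (hψpos h' (v (l + 1)))) Finset.univ_nonempty)
        Finset.univ_nonempty
    have hθψB : ∀ p : H × H, θ p.1 p.2 * ψ p.2 (v (l + 1)) ≤ Bθ := by
      intro p
      rw [hBθ]
      calc θ p.1 p.2 * ψ p.2 (v (l + 1))
          ≤ ∑ h', θ p.1 h' * ψ h' (v (l + 1)) := Finset.single_le_sum
            (fun h' _ => (mul_pos (hθpos p.1 h') (hψpos h' (v (l + 1)))).le) (Finset.mem_univ p.2)
        _ ≤ ∑ g, ∑ h', θ g h' * ψ h' (v (l + 1)) := Finset.single_le_sum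
            (fun g _ => Finset.sum_nonneg
              (fun h' _ => (mul_pos (hθpos g h') (hψpos h' (v (l + 1)))).le)) (Finset.mem_univ p.1)
    set CC : ℝ := (Ma + Ka) * Kb + Mb * Ka with hCC
    have hCCpos : 0 < CC := by rw [hCC]; positivity
    have hCab : ∀ t, 0 ≤ t → ∀ p : H × H,
        |α t l p.1 * θ p.1 p.2 * ψ p.2 (v (l + 1)) * β t (l + 1) p.2
          - ca p.1 * θ p.1 p.2 * ψ p.2 (v (l + 1)) * cb p.2|
          ≤ (Bθ * CC + 1) * Real.exp (-(min lama lamb) * t) := by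
      intro t ht p
      have hEa : (0:ℝ) < Real.exp (-lama * t) := Real.exp_pos _
      have hEb : (0:ℝ) < Real.exp (-lamb * t) := Real.exp_pos _
      have hE : (0:ℝ) < Real.exp (-(min lama lamb) * t) := Real.exp_pos _
      have hEa1 : Real.exp (-lama * t) ≤ 1 := Real.exp_le_one_iff.mpr (by nlinarith)
      have hEaE : Real.exp (-lama * t) ≤ Real.exp (-(min lama lamb) * t) :=
        Real.exp_le_exp.mpr (by nlinarith [min_le_left lama lamb])
      have hEbE : Real.exp (-lamb * t) ≤ Real.exp (-(min lama lamb) * t) :=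
        Real.exp_le_exp.mpr (by nlinarith [min_le_right lama lamb])
      have hpb := BW.prod_bound (hba t ht p.1) (hbb t ht p.2) (hcaM p.1) (hcbM p.2)
        hEa1 hEa hEb hKa hKb hMapos.le hMbpos.le hEaE hEbE
      rw [← hCC] at hpb
      have hre : α t l p.1 * θ p.1 p.2 * ψ p.2 (v (l + 1)) * β t (l + 1) p.2
          - ca p.1 * θ p.1 p.2 * ψ p.2 (v (l + 1)) * cb p.2
          = (θ p.1 p.2 * ψ p.2 (v (l + 1))) * (α t l p.1 * β t (l + 1) p.2 - ca p.1 * cb p.2) := by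
        ring
      rw [hre, abs_mul, abs_of_pos (mul_pos (hθpos p.1 p.2) (hψpos p.2 (v (l + 1))))]
      have hθψnn : 0 < θ p.1 p.2 * ψ p.2 (v (l + 1)) :=
        mul_pos (hθpos p.1 p.2) (hψpos p.2 (v (l + 1)))
      have habs : 0 ≤ |α t l p.1 * β t (l + 1) p.2 - ca p.1 * cb p.2| := abs_nonneg _
      nlinarith [hθψB p, mul_le_mul_of_nonneg_left hpb hθψnn.le,
        mul_le_mul_of_nonneg_right (hθψB p) (mul_pos hCCpos hE).le]
    exact BW.petal (ι := H × H) (hstar, hstar) (fun p => kξ l p.1 p.2) (fun p => hkξ l p.1 p.2)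
      (fun t p => α t l p.1 * θ p.1 p.2 * ψ p.2 (v (l + 1)) * β t (l + 1) p.2)
      (fun p => ca p.1 * θ p.1 p.2 * ψ p.2 (v (l + 1)) * cb p.2)
      (fun p => mul_pos (mul_pos (mul_pos (hcapos p.1) (hθpos p.1 p.2)) (hψpos p.2 (v (l + 1))))
        (hcbpos p.2))
      (fun t ht p => mul_nonneg (mul_nonneg (mul_nonneg (hcann t ht p.1) (hθpos p.1 p.2).le)
        (hψpos p.2 (v (l + 1))).le) (hcbnn t ht p.2))
      (Bθ * CC + 1) (min lama lamb) (by positivity) (lt_min hlama hlamb) hCab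
      (fun t p => ξ t l p.1 p.2)
      (fun p hp t ht => hξ l h1 h2 p.1 p.2 (by rwa [Prod.mk.eta]) t ht)
      (fun t ht => hξ' l h1 h2 t ht)
      (fun p => hξ0 l p.1 p.2)
      (by rw [Fintype.sum_prod_type]; exact hξtot l h1 h2)
  -- unconditional choice forms
  have αfull : ∀ l : ℕ, ∃ c : H → ℝ, ∃ K lam : ℝ, 0 < K ∧ 0 < lam ∧
      (1 ≤ l → l ≤ L → ∀ t, 0 ≤ t → ∀ h, |α t l h - c h| ≤ K * Real.exp (-lam * t)) := by
    intro l
    by_cases hc : 1 ≤ l ∧ l ≤ L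
    · obtain ⟨c, -, -, K, lam, hK, hlam, hb⟩ := αkey l hc.1 hc.2
      exact ⟨c, K, lam, hK, hlam, fun _ _ => hb⟩
    · exact ⟨fun _ => 0, 1, 1, one_pos, one_pos, fun ha hb => absurd ⟨ha, hb⟩ hc⟩
  have βfull : ∀ l : ℕ, ∃ c : H → ℝ, ∃ K lam : ℝ, 0 < K ∧ 0 < lam ∧
      (1 ≤ l → l ≤ L → ∀ t, 0 ≤ t → ∀ h, |β t l h - c h| ≤ K * Real.exp (-lam * t)) := by
    intro l
    by_cases hc : 1 ≤ l ∧ l ≤ L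
    · obtain ⟨c, -, -, K, lam, hK, hlam, hb⟩ := βkey (L - l) l (by omega) hc.1
      exact ⟨c, K, lam, hK, hlam, fun _ _ => hb⟩
    · exact ⟨fun _ => 0, 1, 1, one_pos, one_pos, fun ha hb => absurd ⟨ha, hb⟩ hc⟩
  have γfull : ∀ l : ℕ, ∃ c : H → ℝ, ∃ K lam : ℝ, 0 < K ∧ 0 < lam ∧
      (1 ≤ l → l ≤ L - 1 → ∀ t, 0 ≤ t → ∀ h, |γ t l h - c h| ≤ K * Real.exp (-lam * t)) := by
    intro l
    by_cases hc : 1 ≤ l ∧ l ≤ L - 1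
    · obtain ⟨c, -, -, K, lam, hK, hlam, hb⟩ := γkey l hc.1 hc.2
      exact ⟨c, K, lam, hK, hlam, fun _ _ => hb⟩
    · exact ⟨fun _ => 0, 1, 1, one_pos, one_pos, fun ha hb => absurd ⟨ha, hb⟩ hc⟩
  have ξfull : ∀ l : ℕ, ∃ c : H × H → ℝ, ∃ K lam : ℝ, 0 < K ∧ 0 < lam ∧
      (1 ≤ l → l ≤ L - 1 → ∀ t, 0 ≤ t → ∀ p : H × H,
        |ξ t l p.1 p.2 - c p| ≤ K * Real.exp (-lam * t)) := by
    intro l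
    by_cases hc : 1 ≤ l ∧ l ≤ L - 1
    · obtain ⟨c, -, -, K, lam, hK, hlam, hb⟩ := ξkey l hc.1 hc.2
      exact ⟨c, K, lam, hK, hlam, fun _ _ => hb⟩
    · exact ⟨fun _ => 0, 1, 1, one_pos, one_pos, fun ha hb => absurd ⟨ha, hb⟩ hc⟩
  choose cα Kα lamα hKα hlamα hbα using αfull
  choose cβ Kβ lamβ hKβ hlamβ hbβ using βfull
  choose cγ Kγ lamγ hKγ hlamγ hbγ using γfull
  choose cξ Kξ lamξ hKξ hlamξ hbξ using ξfull
  have hcard : (0:ℝ) < (Fintype.card H : ℝ) := by exact_mod_cast Fintype.card_pos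
  have groupα : ∃ K lam : ℝ, 0 < K ∧ 0 < lam ∧ ∀ t, 0 ≤ t →
      ∑ l ∈ Finset.Icc 1 L, ∑ h, |α t l h - cα l h| ≤ K * Real.exp (-lam * t) := by
    apply BW.combine
    intro l hl
    rw [Finset.mem_Icc] at hl
    refine ⟨(Fintype.card H : ℝ) * Kα l, lamα l, mul_pos hcard (hKα l), hlamα l, ?_⟩
    intro t ht
    calc ∑ h, |α t l h - cα l h| ≤ ∑ _h : H, Kα l * Real.exp (-lamα l * t) :=
          Finset.sum_le_sum (fun h _ => hbα l hl.1 hl.2 t ht h)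
      _ = (Fintype.card H : ℝ) * Kα l * Real.exp (-lamα l * t) := by
          rw [Finset.sum_const, Finset.card_univ, nsmul_eq_mul]
          ring
  have groupβ : ∃ K lam : ℝ, 0 < K ∧ 0 < lam ∧ ∀ t, 0 ≤ t →
      ∑ l ∈ Finset.Icc 1 L, ∑ h, |β t l h - cβ l h| ≤ K * Real.exp (-lam * t) := by
    apply BW.combine
    intro l hl
    rw [Finset.mem_Icc] at hl
    refine ⟨(Fintype.card H : ℝ) * Kβ l, lamβ l, mul_pos hcard (hKβ l), hlamβ l, ?_⟩
    intro t ht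
    calc ∑ h, |β t l h - cβ l h| ≤ ∑ _h : H, Kβ l * Real.exp (-lamβ l * t) :=
          Finset.sum_le_sum (fun h _ => hbβ l hl.1 hl.2 t ht h)
      _ = (Fintype.card H : ℝ) * Kβ l * Real.exp (-lamβ l * t) := by
          rw [Finset.sum_const, Finset.card_univ, nsmul_eq_mul]
          ring
  have groupγ : ∃ K lam : ℝ, 0 < K ∧ 0 < lam ∧ ∀ t, 0 ≤ t →
      ∑ l ∈ Finset.Icc 1 (L - 1), ∑ h, |γ t l h - cγ l h| ≤ K * Real.exp (-lam * t) := by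
    apply BW.combine
    intro l hl
    rw [Finset.mem_Icc] at hl
    refine ⟨(Fintype.card H : ℝ) * Kγ l, lamγ l, mul_pos hcard (hKγ l), hlamγ l, ?_⟩
    intro t ht
    calc ∑ h, |γ t l h - cγ l h| ≤ ∑ _h : H, Kγ l * Real.exp (-lamγ l * t) :=
          Finset.sum_le_sum (fun h _ => hbγ l hl.1 hl.2 t ht h)
      _ = (Fintype.card H : ℝ) * Kγ l * Real.exp (-lamγ l * t) := by
          rw [Finset.sum_const, Finset.card_univ, nsmul_eq_mul]
          ring
  have hcard2 : (0:ℝ) < (Fintype.card (H × H) : ℝ) := by exact_mod_cast Fintype.card_pos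
  have groupξ : ∃ K lam : ℝ, 0 < K ∧ 0 < lam ∧ ∀ t, 0 ≤ t →
      ∑ l ∈ Finset.Icc 1 (L - 1), ∑ g, ∑ h, |ξ t l g h - cξ l (g, h)|
        ≤ K * Real.exp (-lam * t) := by
    apply BW.combine
    intro l hl
    rw [Finset.mem_Icc] at hl
    refine ⟨(Fintype.card (H × H) : ℝ) * Kξ l, lamξ l, mul_pos hcard2 (hKξ l), hlamξ l, ?_⟩
    intro t ht
    have hfold : ∑ g, ∑ h, |ξ t l g h - cξ l (g, h)|
        = ∑ p : H × H, |ξ t l p.1 p.2 - cξ l p| :=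
      (Fintype.sum_prod_type (fun p : H × H => |ξ t l p.1 p.2 - cξ l p|)).symm
    rw [hfold]
    calc ∑ p : H × H, |ξ t l p.1 p.2 - cξ l p|
        ≤ ∑ _p : H × H, Kξ l * Real.exp (-lamξ l * t) :=
          Finset.sum_le_sum (fun p _ => hbξ l hl.1 hl.2 t ht p)
      _ = (Fintype.card (H × H) : ℝ) * Kξ l * Real.exp (-lamξ l * t) := by
          rw [Finset.sum_const, Finset.card_univ, nsmul_eq_mul]
          ring
  obtain ⟨KA, lA, hKA, hlA, hbA⟩ := groupα
  obtain ⟨KB, lB, hKB, hlB, hbB⟩ := groupβ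
  obtain ⟨KG, lG, hKG, hlG, hbG⟩ := groupγ
  obtain ⟨KX, lX, hKX, hlX, hbX⟩ := groupξ
  obtain ⟨K1, l1, hK1, hl1, hb1⟩ := BW.combine2 hKA hlA hKB hlB hbA hbB
  obtain ⟨K2, l2, hK2, hl2, hb2⟩ := BW.combine2 hK1 hl1 hKG hlG hb1 hbG
  obtain ⟨K3, l3, hK3, hl3, hb3⟩ := BW.combine2 hK2 hl2 hKX hlX hb2 hbX
  exact ⟨cα, cβ, cγ, fun l g h => cξ l (g, h), K3, l3, hK3, hl3, fun t ht => hb3 t ht⟩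
end

section
/- The Maximization-step reaction system converges exponentially fast when the expectation species are held fixed at a positive point. Precisely: suppose γ ∈ ℝ^{{1..L}×H} and ξ ∈ ℝ^{{1..L−1}×H×H} are fixed with all entries strictly positive, assume every symbol w ∈ V occurs in the observed sequence (v_1,…,v_L), and fix positive rate constants k^θ_{gh} and k^ψ_{hw} (one per petal). Let θ : [0,∞) → ℝ^{H×H} and ψ : [0,∞) → ℝ^{H×V} be differentiable and satisfy the mass-action ODEs: for g ∈ H and h ≠ h*: θ'_{gh}(t) = k^θ_{gh}(θ_{g,h*}(t)·Σ_{l=1}^{L−1} ξ_{lgh} − θ_{gh}(t)·Σ_{l=1}^{L−1} ξ_{l,g,h*}) and θ'_{g,h*}(t) = −Σ_{h≠h*} θ'_{gh}(t); for h ∈ H and w ≠ v*: ψ'_{hw}(t) = k^ψ_{hw}(ψ_{h,v*}(t)·Σ_{l=1}^{L} γ_{lh}δ_{w,v_l} − ψ_{hw}(t)·Σ_{l=1}^{L} γ_{lh}δ_{v*,v_l}) and ψ'_{h,v*}(t) = −Σ_{w≠v*} ψ'_{hw}(t). Assume all initial values are nonnegative with Σ_{h∈H} θ_{gh}(0) >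 0 for each g ∈ H and Σ_{w∈V} ψ_{hw}(0) > 0 for each h ∈ H. Then there exist limits θ∞, ψ∞ and constants K > 0, λ > 0 such that ‖θ(t) − θ∞‖ + ‖ψ(t) − ψ∞‖ ≤ K e^{−λ t} for all t ≥ 0. -/
open Finset in

lemma star_G_pos {ι : Type*} [Fintype ι] (a : ι → ℝ) (ha : ∀ i, 0 < a i)
    (u : ι → ℝ) (hu : u ≠ 0) : 0 < ∑ i, (u i)^2 / a i := by
  obtain ⟨j, hj⟩ : ∃ j, u j ≠ 0 := by
    by_contra h; push_neg at h; exact hu (funext h)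
  apply Finset.sum_pos' (fun i _ => by have := ha i; positivity)
  exact ⟨j, Finset.mem_univ j, by have := ha j; positivity⟩

lemma star_key_ineq {ι : Type*} [Fintype ι] [DecidableEq ι] (c : ι)
    (a k : ι → ℝ) (ha : ∀ i, 0 < a i) (hk : ∀ i, 0 < k i) :
    ∃ lam : ℝ, 0 < lam ∧ ∀ u : ι → ℝ, (∑ i, u i = 0) →
      lam * (∑ i, (u i)^2 / a i)
        ≤ ∑ i ∈ Finset.univ.erase c, (k i / (a i * a c)) * (a c * u i - a i * u c)^2 := by
  classical
  set G : (ι → ℝ) → ℝ := fun u => ∑ i, (u i)^2 / a i with hG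
  set F : (ι → ℝ) → ℝ := fun u => ∑ i ∈ Finset.univ.erase c,
      (k i / (a i * a c)) * (a c * u i - a i * u c)^2 with hF
  have hGc : Continuous G := by
    apply continuous_finset_sum; intro i _
    exact ((continuous_apply i).pow 2).div_const _
  have hFc : Continuous F := by
    apply continuous_finset_sum; intro i _
    exact continuous_const.mul
      (((continuous_const.mul (continuous_apply i)).sub
        (continuous_const.mul (continuous_apply c))).pow 2)
  -- homogeneity
  have hGhom : ∀ (s : ℝ) (u : ι → ℝ), G (s • u) = s^2 * G u := by
    intro s u
    simp only [hG, Pi.smul_apply, smul_eq_mul, Finset.mul_sum]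
    exact Finset.sum_congr rfl fun i _ => by ring
  have hFhom : ∀ (s : ℝ) (u : ι → ℝ), F (s • u) = s^2 * F u := by
    intro s u
    simp only [hF, Pi.smul_apply, smul_eq_mul, Finset.mul_sum]
    exact Finset.sum_congr rfl fun i _ => by ring
  have hFnn : ∀ u, 0 ≤ F u :=
    fun u => Finset.sum_nonneg fun i _ => by
      have := ha i; have := ha c; have := hk i; positivity
  -- The set T
  set T : Set (ι → ℝ) := {u | (∑ i, u i = 0) ∧ G u = 1} with hT
  by_cases hTne : T.Nonempty
  · -- compactness
    have hclosed : IsClosed T := by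
      apply IsClosed.inter
      · exact isClosed_eq (continuous_finset_sum _ fun i _ => continuous_apply i)
          continuous_const
      · exact isClosed_eq hGc continuous_const
    have hbdd : Bornology.IsBounded T := by
      apply Bornology.IsBounded.subset (Metric.isBounded_closedBall
        (x := (0 : ι → ℝ)) (r := Real.sqrt (∑ i, a i)))
      intro u hu
      rw [Metric.mem_closedBall, dist_zero_right]
      rw [pi_norm_le_iff_of_nonneg (Real.sqrt_nonneg _)]
      intro i
      have h1 : (u i)^2 / a i ≤ 1 := by
        rw [← hu.2]
        exact Finset.single_le_sum (f := fun j => (u j)^2 / a j)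
          (fun j _ => by have := ha j; positivity) (Finset.mem_univ i)
      have h2 : (u i)^2 ≤ a i := by
        have := ha i
        rwa [div_le_one this] at h1
      have h3 : a i ≤ ∑ j, a j :=
        Finset.single_le_sum (fun j _ => (ha j).le) (Finset.mem_univ i)
      calc ‖u i‖ = Real.sqrt ((u i)^2) := by
            rw [Real.sqrt_sq_eq_abs]; rfl
        _ ≤ Real.sqrt (∑ j, a j) := Real.sqrt_le_sqrt (h2.trans h3)
    have hcpt : IsCompact T := Metric.isCompact_of_isClosed_isBounded hclosed hbdd
    obtain ⟨u0, hu0T, hu0min⟩ := hcpt.exists_isMinOn hTne hFc.continuousOn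
    have hu0ne : u0 ≠ 0 := by
      intro h
      have := hu0T.2
      simp [hG, h] at this
    have hm : 0 < F u0 := by
      rcases lt_or_eq_of_le (hFnn u0) with h | h
      · exact h
      -- F u0 = 0 forces u0 proportional to a, contradiction
      exfalso
      have hzero : ∀ i ∈ Finset.univ.erase c, a c * u0 i - a i * u0 c = 0 := by
        intro i hi
        have hsum := h.symm
        have hF0 : F u0 = 0 := h.symm
        have hterm : (k i / (a i * a c)) * (a c * u0 i - a i * u0 c)^2 = 0 :=
          (Finset.sum_eq_zero_iff_of_nonneg
            (fun j _ => by have := ha j; have := ha c; have := hk j; positivity)).mp hF0 i hi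
        have hkpos : 0 < k i / (a i * a c) := by
          have := ha i; have := ha c; have := hk i; positivity
        have := mul_eq_zero.mp hterm
        rcases this with h' | h'
        · exact absurd h' hkpos.ne'
        · exact pow_eq_zero_iff (by norm_num) |>.mp h'
      -- so u0 i = (u0 c / a c) * a i for all i
      have hprop : ∀ i, u0 i = (u0 c / a c) * a i := by
        intro i
        by_cases hic : i = c
        · subst hic; rw [div_mul_cancel₀]; exact (ha i).ne'
        · have := hzero i (Finset.mem_erase.mpr ⟨hic, Finset.mem_univ i⟩)
          have hac := (ha c).ne'
          field_simp
          linarith [this]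
      have hsum0 := hu0T.1
      have hz : (u0 c / a c) * (∑ i, a i) = 0 := by
        rw [Finset.mul_sum, ← hsum0]
        exact Finset.sum_congr rfl fun i _ => (hprop i).symm
      have : Nonempty ι := ⟨c⟩
      have hA : 0 < ∑ i, a i := Finset.sum_pos (fun i _ => ha i) Finset.univ_nonempty
      have huc : u0 c = 0 := by
        have := mul_eq_zero.mp hz
        rcases this with h' | h'
        · have := div_eq_zero_iff.mp h'
          rcases this with h'' | h''
          · exact h''
          · exact absurd h'' (ha c).ne'
        · exact absurd h' hA.ne'
      apply hu0ne
      funext i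
      rw [hprop i, huc]
      simp
    refine ⟨F u0, hm, fun u husum => ?_⟩
    by_cases hu : u = 0
    · subst hu
      simp [hG, hF]
    · have hGu : 0 < G u := star_G_pos a ha u hu
      set s := Real.sqrt (G u) with hs
      have hspos : 0 < s := Real.sqrt_pos.mpr hGu
      have hs2 : s^2 = G u := Real.sq_sqrt hGu.le
      set w := s⁻¹ • u with hw
      have hwT : w ∈ T := by
        constructor
        · simp only [hw, Pi.smul_apply, smul_eq_mul, ← Finset.mul_sum, husum, mul_zero]
        · rw [hw, hGhom, ← hs2]
          field_simp
      have : F u0 ≤ F w := hu0min hwT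
      rw [hw, hFhom] at this
      have h2 : F u0 * s^2 ≤ F u := by
        rw [← hs2] at *
        calc F u0 * s^2 ≤ (s⁻¹^2 * F u) * s^2 := by nlinarith [sq_nonneg s]
          _ = F u := by field_simp
      calc F u0 * G u = F u0 * s^2 := by rw [hs2]
        _ ≤ F u := h2
  · -- T empty: every u with sum zero is zero
    refine ⟨1, one_pos, fun u husum => ?_⟩
    by_cases hu : u = 0
    · subst hu; simp [hG, hF]
    · exfalso
      have hGu : 0 < G u := star_G_pos a ha u hu
      set s := Real.sqrt (G u) with hs
      have hspos : 0 < s := Real.sqrt_pos.mpr hGu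
      have hs2 : s^2 = G u := Real.sq_sqrt hGu.le
      apply hTne
      refine ⟨s⁻¹ • u, ?_, ?_⟩
      · simp only [Pi.smul_apply, smul_eq_mul, ← Finset.mul_sum, husum, mul_zero]
      · rw [hGhom, ← hs2]; field_simp

open Finset in
lemma star_conv {ι : Type*} [Fintype ι] [DecidableEq ι] (c : ι)
    (a k : ι → ℝ) (ha : ∀ i, 0 < a i) (hk : ∀ i, 0 < k i)
    (x : ℝ → ι → ℝ)
    (hode : ∀ i, i ≠ c → ∀ t : ℝ, 0 ≤ t →
      HasDerivAt (fun s => x s i) (k i * (x t c * a i - x t i * a c)) t)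
    (hode' : ∀ t : ℝ, 0 ≤ t →
      HasDerivAt (fun s => x s c)
        (-∑ i ∈ Finset.univ.erase c, k i * (x t c * a i - x t i * a c)) t) :
    ∃ (xinf : ι → ℝ) (K lam : ℝ), 0 < K ∧ 0 < lam ∧
      ∀ t, 0 ≤ t → ∑ i, |x t i - xinf i| ≤ K * Real.exp (-lam * t) := by
  classical
  have : Nonempty ι := ⟨c⟩
  set A := ∑ i, a i with hA
  have hApos : 0 < A := Finset.sum_pos (fun i _ => ha i) Finset.univ_nonempty
  -- uniform derivative function
  set d : ℝ → ι → ℝ := fun t i =>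
    if i = c then -∑ j ∈ Finset.univ.erase c, k j * (x t c * a j - x t j * a c)
    else k i * (x t c * a i - x t i * a c) with hd
  have hder : ∀ i, ∀ t : ℝ, 0 ≤ t → HasDerivAt (fun s => x s i) (d t i) t := by
    intro i t ht
    by_cases hic : i = c
    · subst hic; simpa [hd] using hode' t ht
    · simpa [hd, hic] using hode i hic t ht
  have hdsum : ∀ t : ℝ, (∑ i, d t i) = 0 := by
    intro t
    rw [← Finset.add_sum_erase _ _ (Finset.mem_univ c)]
    have h1 : d t c = -∑ j ∈ Finset.univ.erase c, k j * (x t c * a j - x t j * a c) := by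
      simp [hd]
    have h2 : ∑ i ∈ Finset.univ.erase c, d t i
        = ∑ j ∈ Finset.univ.erase c, k j * (x t c * a j - x t j * a c) := by
      apply Finset.sum_congr rfl
      intro i hi
      have : i ≠ c := (Finset.mem_erase.mp hi).1
      simp [hd, this]
    rw [h1, h2]; ring
  -- conservation
  set S := ∑ i, x 0 i with hS
  have hcons : ∀ t : ℝ, 0 ≤ t → ∑ i, x t i = S := by
    intro t ht
    have key := constant_of_has_deriv_right_zero (f := fun s => ∑ i, x s i)
      (a := 0) (b := t)
      (by
        intro s hs
        have hsum : HasDerivAt (fun y => ∑ i, x y i) (∑ i, d s i) s :=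
          HasDerivAt.fun_sum (fun i _ => hder i s hs.1)
        exact hsum.continuousAt.continuousWithinAt)
      (by
        intro s hs
        have hsum : HasDerivAt (fun y => ∑ i, x y i) (∑ i, d s i) s :=
          HasDerivAt.fun_sum (fun i _ => hder i s hs.1)
        rw [hdsum s] at hsum
        exact hsum.hasDerivWithinAt)
    exact key t (Set.mem_Icc.mpr ⟨ht, le_rfl⟩)
  set xbar : ι → ℝ := fun i => S * a i / A with hxbar
  set e : ℝ → ι → ℝ := fun t i => x t i - xbar i with he
  have hesum : ∀ t : ℝ, 0 ≤ t → ∑ i, e t i = 0 := by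
    intro t ht
    have hxb : ∑ i, xbar i = S := by
      simp only [hxbar]
      rw [← Finset.sum_div, ← Finset.mul_sum, mul_div_assoc, div_self hApos.ne', mul_one]
    simp only [he, Finset.sum_sub_distrib, hcons t ht, hxb, sub_self]
  -- equilibrium cancellation: for any i, x t c * a i - x t i * a c = e t c * a i - e t i * a c
  have hcancel : ∀ t i, x t c * a i - x t i * a c = e t c * a i - e t i * a c := by
    intro t i
    simp only [he, hxbar]
    field_simp
    ring
  obtain ⟨lam, hlam, hkey⟩ := star_key_ineq c a k ha hk
  set V : ℝ → ℝ := fun t => ∑ i, (e t i)^2 / a i with hV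
  have hVnn : ∀ t, 0 ≤ V t := fun t =>
    Finset.sum_nonneg fun i _ => by have := ha i; positivity
  have hVder : ∀ t : ℝ, 0 ≤ t →
      HasDerivAt V (-2 * ∑ i ∈ Finset.univ.erase c,
        (k i / (a i * a c)) * (a c * e t i - a i * e t c)^2) t := by
    intro t ht
    have h1 : HasDerivAt V (∑ i, (2 * e t i * d t i) / a i) t := by
      apply HasDerivAt.fun_sum
      intro i _
      have hxi : HasDerivAt (fun s => (x s i - xbar i)^2 / a i)
          ((2 * (x t i - xbar i) ^ 1 * d t i) / a i) t :=
        (((hder i t ht).sub_const _).pow 2).div_const _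
      simpa [he, pow_one] using hxi
    have h2 : (∑ i, (2 * e t i * d t i) / a i)
        = -2 * ∑ i ∈ Finset.univ.erase c,
            (k i / (a i * a c)) * (a c * e t i - a i * e t c)^2 := by
      rw [← Finset.add_sum_erase _ (fun i => (2 * e t i * d t i) / a i) (Finset.mem_univ c)]
      have hdc : d t c = -∑ j ∈ Finset.univ.erase c, k j * (e t c * a j - e t j * a c) := by
        simp only [hd, if_pos rfl]
        congr 1
        exact Finset.sum_congr rfl fun j _ => by rw [hcancel]
      rw [hdc]
      have h3 : ∑ i ∈ Finset.univ.erase c, (2 * e t i * d t i) / a i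
          = ∑ i ∈ Finset.univ.erase c,
              (2 * e t i * (k i * (e t c * a i - e t i * a c))) / a i := by
        apply Finset.sum_congr rfl
        intro i hi
        have hic : i ≠ c := (Finset.mem_erase.mp hi).1
        simp only [hd, if_neg hic, hcancel]
      rw [h3]
      rw [mul_neg, Finset.mul_sum, neg_div, Finset.sum_div, neg_add_eq_sub,
        ← Finset.sum_sub_distrib, Finset.mul_sum]
      apply Finset.sum_congr rfl
      intro i hi
      have hai := (ha i).ne'
      have hac := (ha c).ne'
      field_simp
      ring
    rw [← h2]
    exact h1
  -- V' ≤ -2 lam V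
  have hVdec : ∀ t : ℝ, 0 ≤ t → V t ≤ V 0 * Real.exp (-(2*lam) * t) := by
    intro t ht
    set W : ℝ → ℝ := fun s => V s * Real.exp (2 * lam * s) with hW
    have hWder : ∀ s : ℝ, 0 ≤ s → HasDerivAt W
        ((-2 * ∑ i ∈ Finset.univ.erase c,
          (k i / (a i * a c)) * (a c * e s i - a i * e s c)^2) * Real.exp (2 * lam * s)
          + V s * (Real.exp (2 * lam * s) * (2 * lam))) s := by
      intro s hs
      exact (hVder s hs).mul ((Real.hasDerivAt_exp _).comp s
        (by simpa using (hasDerivAt_id s).const_mul (2 * lam)))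
    have hWd0 : ∀ s : ℝ, 0 < s → deriv W s ≤ 0 := by
      intro s hs
      rw [(hWder s hs.le).deriv]
      have hle : lam * V s ≤ ∑ i ∈ Finset.univ.erase c,
          (k i / (a i * a c)) * (a c * e s i - a i * e s c)^2 :=
        hkey (e s) (hesum s hs.le)
      have hexp : 0 < Real.exp (2 * lam * s) := Real.exp_pos _
      nlinarith [hVnn s]
    have hanti : AntitoneOn W (Set.Ici (0:ℝ)) := by
      apply antitoneOn_of_deriv_nonpos (convex_Ici 0)
      · intro s hs
        exact ((hWder s hs).differentiableAt).continuousAt.continuousWithinAt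
      · intro s hs
        rw [interior_Ici] at hs
        exact ((hWder s hs.le).differentiableAt).differentiableWithinAt
      · intro s hs
        rw [interior_Ici] at hs
        exact hWd0 s hs
    have := hanti (Set.mem_Ici.mpr le_rfl) (Set.mem_Ici.mpr ht) ht
    simp only [hW, mul_zero, Real.exp_zero, mul_one] at this
    have hexp : 0 < Real.exp (2 * lam * t) := Real.exp_pos _
    have h4 : V t ≤ V 0 / Real.exp (2 * lam * t) := by
      rw [le_div_iff₀ hexp]; exact this
    calc V t ≤ V 0 / Real.exp (2 * lam * t) := h4
      _ = V 0 * Real.exp (-(2*lam) * t) := by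
          rw [div_eq_mul_inv, ← Real.exp_neg]
          congr 1
          ring
  -- pointwise bound
  have hpt : ∀ t : ℝ, 0 ≤ t → ∀ i, |e t i| ≤ Real.sqrt (a i * V 0) * Real.exp (-lam * t) := by
    intro t ht i
    have h1 : (e t i)^2 / a i ≤ V t :=
      Finset.single_le_sum (f := fun j => (e t j)^2 / a j)
        (fun j _ => by have := ha j; positivity) (Finset.mem_univ i)
    have h2 : (e t i)^2 ≤ a i * V t := by
      have := ha i
      rw [div_le_iff₀ this] at h1
      linarith [h1]
    have h3 : (e t i)^2 ≤ a i * V 0 * Real.exp (-(2*lam) * t) := by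
      calc (e t i)^2 ≤ a i * V t := h2
        _ ≤ a i * (V 0 * Real.exp (-(2*lam)*t)) :=
            mul_le_mul_of_nonneg_left (hVdec t ht) (ha i).le
        _ = a i * V 0 * Real.exp (-(2*lam)*t) := by ring
    have hsq : Real.exp (-(2*lam) * t) = (Real.exp (-lam * t))^2 := by
      rw [sq, ← Real.exp_add]
      congr 1
      ring
    calc |e t i| = Real.sqrt ((e t i)^2) := (Real.sqrt_sq_eq_abs _).symm
      _ ≤ Real.sqrt (a i * V 0 * Real.exp (-(2*lam)*t)) := Real.sqrt_le_sqrt h3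
      _ = Real.sqrt (a i * V 0) * Real.sqrt (Real.exp (-(2*lam)*t)) := by
          apply Real.sqrt_mul
          have := ha i; have := hVnn 0; positivity
      _ = Real.sqrt (a i * V 0) * Real.exp (-lam * t) := by
          rw [hsq, Real.sqrt_sq (Real.exp_nonneg _)]
  refine ⟨xbar, (∑ i, Real.sqrt (a i * V 0)) + 1, lam, ?_, hlam, ?_⟩
  · have : 0 ≤ ∑ i, Real.sqrt (a i * V 0) :=
      Finset.sum_nonneg fun i _ => Real.sqrt_nonneg _
    linarith
  · intro t ht
    have hexp : 0 < Real.exp (-lam * t) := Real.exp_pos _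
    calc ∑ i, |x t i - xbar i| = ∑ i, |e t i| := rfl
      _ ≤ ∑ i, Real.sqrt (a i * V 0) * Real.exp (-lam * t) :=
          Finset.sum_le_sum fun i _ => hpt t ht i
      _ = (∑ i, Real.sqrt (a i * V 0)) * Real.exp (-lam * t) := by
          rw [← Finset.sum_mul]
      _ ≤ ((∑ i, Real.sqrt (a i * V 0)) + 1) * Real.exp (-lam * t) := by
          nlinarith



/-- The Maximization-step reaction system of the Baum-Welch reaction network converges
exponentially fast when the expectation species `γ`, `ξ` are held fixed at a positive
point: under the mass-action ODEs with positive petal rate constants `kθ`, `kψ`, positive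
fixed `γ`, `ξ`, every symbol occurring in the observed sequence, nonnegative initial
conditions, and positive initial totals, the species `θ` and `ψ` converge exponentially
fast to some limits `θ∞`, `ψ∞`. -/
theorem maximization_step_exponential_convergence
    {H V : Type*} [Fintype H] [Fintype V] [Nonempty H] [Nonempty V]
    [DecidableEq H] [DecidableEq V]
    (hstar : H) (vstar : V) (L : ℕ) (hL : 2 ≤ L) (v : ℕ → V)
    (hocc : ∀ w : V, ∃ l, 1 ≤ l ∧ l ≤ L ∧ v l = w)
    (γ : ℕ → H → ℝ) (ξ : ℕ → H → H → ℝ)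
    (hγpos : ∀ l, 1 ≤ l → l ≤ L → ∀ h, 0 < γ l h)
    (hξpos : ∀ l, 1 ≤ l → l ≤ L - 1 → ∀ g h, 0 < ξ l g h)
    (kθ : H → H → ℝ) (kψ : H → V → ℝ)
    (hkθ : ∀ g h, 0 < kθ g h) (hkψ : ∀ h w, 0 < kψ h w)
    (θ : ℝ → H → H → ℝ) (ψ : ℝ → H → V → ℝ)
    -- mass-action ODE for θ, non-leader species:
    (hθode : ∀ g h, h ≠ hstar → ∀ t : ℝ, 0 ≤ t →
      HasDerivAt (fun s => θ s g h)
        (kθ g h * (θ t g hstar * (∑ l ∈ Finset.Icc 1 (L - 1), ξ l g h)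
          - θ t g h * (∑ l ∈ Finset.Icc 1 (L - 1), ξ l g hstar))) t)
    -- mass-action ODE for θ, leader species:
    (hθode' : ∀ g, ∀ t : ℝ, 0 ≤ t →
      HasDerivAt (fun s => θ s g hstar)
        (-∑ h ∈ Finset.univ.erase hstar,
          kθ g h * (θ t g hstar * (∑ l ∈ Finset.Icc 1 (L - 1), ξ l g h)
            - θ t g h * (∑ l ∈ Finset.Icc 1 (L - 1), ξ l g hstar))) t)
    -- mass-action ODE for ψ, non-leader species:
    (hψode : ∀ h w, w ≠ vstar → ∀ t : ℝ, 0 ≤ t →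
      HasDerivAt (fun s => ψ s h w)
        (kψ h w * (ψ t h vstar
            * (∑ l ∈ Finset.Icc 1 L, γ l h * (if w = v l then (1 : ℝ) else 0))
          - ψ t h w
            * (∑ l ∈ Finset.Icc 1 L, γ l h * (if vstar = v l then (1 : ℝ) else 0)))) t)
    -- mass-action ODE for ψ, leader species:
    (hψode' : ∀ h, ∀ t : ℝ, 0 ≤ t →
      HasDerivAt (fun s => ψ s h vstar)
        (-∑ w ∈ Finset.univ.erase vstar,
          kψ h w * (ψ t h vstar
              * (∑ l ∈ Finset.Icc 1 L, γ l h * (if w = v l then (1 : ℝ) else 0))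
            - ψ t h w
              * (∑ l ∈ Finset.Icc 1 L, γ l h * (if vstar = v l then (1 : ℝ) else 0)))) t)
    -- nonnegative initial conditions with positive totals:
    (hθ0 : ∀ g h, 0 ≤ θ 0 g h) (hψ0 : ∀ h w, 0 ≤ ψ 0 h w)
    (hθtot : ∀ g, 0 < ∑ h, θ 0 g h) (hψtot : ∀ h, 0 < ∑ w, ψ 0 h w) :
    ∃ (θinf : H → H → ℝ) (ψinf : H → V → ℝ) (K lam : ℝ), 0 < K ∧ 0 < lam ∧
      ∀ t : ℝ, 0 ≤ t →
        (∑ g, ∑ h, |θ t g h - θinf g h|) + (∑ h, ∑ w, |ψ t h w - ψinf h w|)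
          ≤ K * Real.exp (-lam * t) := by
  classical
  -- positivity of the coefficient vectors
  have hIccθ : (1 : ℕ) ∈ Finset.Icc 1 (L - 1) := by
    rw [Finset.mem_Icc]; omega
  have haθ : ∀ g h, 0 < ∑ l ∈ Finset.Icc 1 (L - 1), ξ l g h := by
    intro g h
    apply Finset.sum_pos
    · intro l hl
      rw [Finset.mem_Icc] at hl
      exact hξpos l hl.1 hl.2 g h
    · exact ⟨1, hIccθ⟩
  have haψ : ∀ h w, 0 < ∑ l ∈ Finset.Icc 1 L, γ l h * (if w = v l then (1:ℝ) else 0) := by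
    intro h w
    obtain ⟨l0, hl01, hl0L, hl0v⟩ := hocc w
    apply Finset.sum_pos'
    · intro l hl
      rw [Finset.mem_Icc] at hl
      have := hγpos l hl.1 hl.2 h
      split <;> simp <;> positivity
    · refine ⟨l0, Finset.mem_Icc.mpr ⟨hl01, hl0L⟩, ?_⟩
      rw [if_pos hl0v.symm, mul_one]
      exact hγpos l0 hl01 hl0L h
  -- apply star convergence row by row
  have hθconv : ∀ g : H, ∃ (xinf : H → ℝ) (K lam : ℝ), 0 < K ∧ 0 < lam ∧
      ∀ t, 0 ≤ t → ∑ h, |θ t g h - xinf h| ≤ K * Real.exp (-lam * t) := by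
    intro g
    exact star_conv hstar (fun h => ∑ l ∈ Finset.Icc 1 (L - 1), ξ l g h) (kθ g)
      (haθ g) (hkθ g) (fun t h => θ t g h) (fun h hne t ht => hθode g h hne t ht)
      (fun t ht => hθode' g t ht)
  have hψconv : ∀ h : H, ∃ (xinf : V → ℝ) (K lam : ℝ), 0 < K ∧ 0 < lam ∧
      ∀ t, 0 ≤ t → ∑ w, |ψ t h w - xinf w| ≤ K * Real.exp (-lam * t) := by
    intro h
    exact star_conv vstar
      (fun w => ∑ l ∈ Finset.Icc 1 L, γ l h * (if w = v l then (1:ℝ) else 0)) (kψ h)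
      (haψ h) (hkψ h) (fun t w => ψ t h w) (fun w hne t ht => hψode h w hne t ht)
      (fun t ht => hψode' h t ht)
  choose θinf Kθ lamθ hKθ hlamθ hbθ using hθconv
  choose ψinf Kψ lamψ hKψ hlamψ hbψ using hψconv
  set lam : ℝ := min (Finset.univ.inf' Finset.univ_nonempty lamθ)
    (Finset.univ.inf' Finset.univ_nonempty lamψ) with hlamdef
  have hlampos : 0 < lam := by
    apply lt_min
    · rw [Finset.lt_inf'_iff]; exact fun g _ => hlamθ g
    · rw [Finset.lt_inf'_iff]; exact fun h _ => hlamψ h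
  have hlamleθ : ∀ g, lam ≤ lamθ g := fun g =>
    (min_le_left _ _).trans (Finset.inf'_le _ (Finset.mem_univ g))
  have hlamleψ : ∀ h, lam ≤ lamψ h := fun h =>
    (min_le_right _ _).trans (Finset.inf'_le _ (Finset.mem_univ h))
  refine ⟨θinf, ψinf, (∑ g, Kθ g) + (∑ h, Kψ h), lam, ?_, hlampos, ?_⟩
  · have h1 : 0 < ∑ g, Kθ g := Finset.sum_pos (fun g _ => hKθ g) Finset.univ_nonempty
    have h2 : 0 < ∑ h, Kψ h := Finset.sum_pos (fun h _ => hKψ h) Finset.univ_nonempty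
    linarith
  · intro t ht
    have hexpmono : ∀ mu : ℝ, lam ≤ mu → Real.exp (-mu * t) ≤ Real.exp (-lam * t) := by
      intro mu hmu
      apply Real.exp_le_exp.mpr
      nlinarith
    have hθb : ∀ g, ∑ h, |θ t g h - θinf g h| ≤ Kθ g * Real.exp (-lam * t) := by
      intro g
      refine (hbθ g t ht).trans ?_
      exact mul_le_mul_of_nonneg_left (hexpmono _ (hlamleθ g)) (hKθ g).le
    have hψb : ∀ h, ∑ w, |ψ t h w - ψinf h w| ≤ Kψ h * Real.exp (-lam * t) := by
      intro h
      refine (hbψ h t ht).trans ?_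
      exact mul_le_mul_of_nonneg_left (hexpmono _ (hlamleψ h)) (hKψ h).le
    calc (∑ g, ∑ h, |θ t g h - θinf g h|) + (∑ h, ∑ w, |ψ t h w - ψinf h w|)
        ≤ (∑ g, Kθ g * Real.exp (-lam * t)) + (∑ h, Kψ h * Real.exp (-lam * t)) :=
          add_le_add (Finset.sum_le_sum fun g _ => hθb g)
            (Finset.sum_le_sum fun h _ => hψb h)
      _ = ((∑ g, Kθ g) + (∑ h, Kψ h)) * Real.exp (-lam * t) := by
          rw [← Finset.sum_mul, ← Finset.sum_mul, add_mul]
end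

section
/- Emission-matrix component of the positive fixed-point correspondence: let H and V be finite nonempty sets, v* ∈ V, L ≥ 1 an integer, v = (v_1,…,v_L) ∈ V^L an observed sequence, and let γ : {1,…,L}×H → ℝ and ψ : H×V → ℝ have all entries strictly positive. If ψ_{hw}·Σ_{l=1}^{L} γ_{lh}δ_{v*,v_l} = ψ_{h,v*}·Σ_{l=1}^{L} γ_{lh}δ_{w,v_l} for all h ∈ H and w ∈ V, then ψ_{hw} = (Σ_{l=1}^{L} γ_{lh}δ_{w,v_l} / Σ_{l=1}^{L} γ_{lh}) · Σ_{u∈V} ψ_{hu} for all h ∈ H and w ∈ V. -/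
/-- Emission-matrix component of the positive fixed-point correspondence: if the positive
arrays `γ` and `ψ` satisfy the balance equations
`ψ h w * ∑_{l=1}^{L} γ l h * δ_{v*,v_l} = ψ h v* * ∑_{l=1}^{L} γ l h * δ_{w,v_l}`, then
`ψ h w = (∑_{l=1}^{L} γ l h * δ_{w,v_l} / ∑_{l=1}^{L} γ l h) * ∑ u, ψ h u`. -/
theorem emission_matrix_component
    {H V : Type*} [Fintype H] [Fintype V] [Nonempty H] [Nonempty V] [DecidableEq V]
    (vstar : V) (L : ℕ) (hL : 1 ≤ L) (v : ℕ → V)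
    (γ : ℕ → H → ℝ) (ψ : H → V → ℝ)
    (hγ : ∀ l, 1 ≤ l → l ≤ L → ∀ h, 0 < γ l h)
    (hψ : ∀ h w, 0 < ψ h w)
    (hbal : ∀ h w, ψ h w * ∑ l ∈ Finset.Icc 1 L, γ l h * (if vstar = v l then (1 : ℝ) else 0)
      = ψ h vstar * ∑ l ∈ Finset.Icc 1 L, γ l h * (if w = v l then (1 : ℝ) else 0)) :
    ∀ h w, ψ h w
      = (∑ l ∈ Finset.Icc 1 L, γ l h * (if w = v l then (1 : ℝ) else 0))
          / (∑ l ∈ Finset.Icc 1 L, γ l h) * ∑ u, ψ h u := by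
  intro h w
  set S : V → ℝ := fun u => ∑ l ∈ Finset.Icc 1 L, γ l h * (if u = v l then (1 : ℝ) else 0)
    with hS
  set T : ℝ := ∑ l ∈ Finset.Icc 1 L, γ l h with hT
  have hTpos : 0 < T := by
    apply Finset.sum_pos
    · intro l hl
      exact hγ l (Finset.mem_Icc.mp hl).1 (Finset.mem_Icc.mp hl).2 h
    · exact Finset.nonempty_Icc.mpr hL
  have hSnn : ∀ u, 0 ≤ S u := by
    intro u
    apply Finset.sum_nonneg
    intro l hl
    have := hγ l (Finset.mem_Icc.mp hl).1 (Finset.mem_Icc.mp hl).2 h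
    positivity
  have hSsum : ∑ u : V, S u = T := by
    rw [hS, hT, Finset.sum_comm]
    refine Finset.sum_congr rfl fun l _ => ?_
    rw [← Finset.mul_sum]
    simp
  have hSv : 0 < S vstar := by
    rcases lt_or_eq_of_le (hSnn vstar) with h' | h'
    · exact h'
    · exfalso
      have hall : ∀ u : V, S u = 0 := by
        intro u
        have hb : ψ h u * S vstar = ψ h vstar * S u := hbal h u
        rw [← h'] at hb
        nlinarith [hψ h u, hψ h vstar]
      have : T = 0 := by rw [← hSsum]; simp [hall]
      linarith
  have hkey : ∀ u : V, ψ h u = ψ h vstar * S u / S vstar := by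
    intro u
    have hb : ψ h u * S vstar = ψ h vstar * S u := hbal h u
    field_simp
    linarith
  have hsumψ : ∑ u : V, ψ h u = ψ h vstar * T / S vstar := by
    rw [← hSsum, Finset.mul_sum, Finset.sum_div]
    exact Finset.sum_congr rfl fun u _ => hkey u
  show ψ h w = S w / T * ∑ u, ψ h u
  rw [hsumψ, hkey w]
  field_simp
end
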